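/- arXiv:1411.6879 — 3 statements merged into one kernel-verified Lean document; each statement's English description precedes it below -/
import Mathlib

section
/- Under the hypotheses of the main theorem ($\Pro(g(i)=j)=1/N$, $\Pro(g(i_1)=j_1,g(i_2)=j_2)\le C_G/N^2$ for distinct pairs), let $a$ be a non-negative $n\times N$ matrix supported on the positions $h(1),\dots,h(\ell N)$ with $a(h(1))\ge\dots\ge a(h(\ell N))$, and let $\widetilde a$ be the matrix with $\widetilde a(h(j)) = \frac{1}{\ell N}\sum_{i=1}^{\ell N} a(h(i))$ for $j\le \ell N$ and $0$ otherwise. Then $\E S(\widetilde a) \le (8+16C_G)\,\E S(a)$, where $S(b)(g) = \sum_{k=1}^{\ell}\kmax_{1\le i\le n} b_{ig(i)}$. -/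
/-- `kmax x k` is the `k`-th largest entry (1-indexed) of the vector `x`. -/
noncomputable def kmax {n : ℕ} (x : Fin n → ℝ) (k : ℕ) : ℝ :=
  ((List.ofFn x).mergeSort (fun a b => decide (b ≤ a))).getD (k - 1) 0



lemma kmax_nonneg {n : ℕ} (x : Fin n → ℝ) (hx : ∀ i, 0 ≤ x i) (k : ℕ) : 0 ≤ kmax x k := by
  unfold kmax
  set l := (List.ofFn x).mergeSort (fun a b => decide (b ≤ a)) with hl
  rcases lt_or_ge (k-1) l.length with hlt | hge
  · rw [List.getD_eq_getElem l 0 hlt]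
    have hmem : l[k-1] ∈ l := List.getElem_mem hlt
    have : l[k-1] ∈ List.ofFn x := (List.mergeSort_perm (List.ofFn x) _).subset hmem
    obtain ⟨i, hi⟩ := List.mem_ofFn.mp this
    rw [← hi]; exact hx i
  · rw [List.getD_eq_default l 0 hge]

lemma kmax_le {n : ℕ} (x : Fin n → ℝ) (B : ℝ) (hB : 0 ≤ B) (hx : ∀ i, x i ≤ B) (k : ℕ) :
    kmax x k ≤ B := by
  unfold kmax
  set l := (List.ofFn x).mergeSort (fun a b => decide (b ≤ a)) with hl
  rcases lt_or_ge (k-1) l.length with hlt | hge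
  · rw [List.getD_eq_getElem l 0 hlt]
    have hmem : l[k-1] ∈ l := List.getElem_mem hlt
    have : l[k-1] ∈ List.ofFn x := (List.mergeSort_perm (List.ofFn x) _).subset hmem
    obtain ⟨i, hi⟩ := List.mem_ofFn.mp this
    rw [← hi]; exact hx i
  · rw [List.getD_eq_default l 0 hge]; exact hB

lemma le_kmax {n : ℕ} (x : Fin n → ℝ) (b : ℝ) (k : ℕ) (hk : 1 ≤ k)
    (s : Finset (Fin n)) (hcard : k ≤ s.card) (hs : ∀ i ∈ s, b ≤ x i) :
    b ≤ kmax x k := by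
  classical
  unfold kmax
  set le : ℝ → ℝ → Bool := fun a b => decide (b ≤ a) with hle
  set l := (List.ofFn x).mergeSort le with hl
  have hperm : l.Perm (List.ofFn x) := List.mergeSort_perm (List.ofFn x) le
  have hsort : List.Pairwise (fun a b => le a b = true) l :=
    List.pairwise_mergeSort (le := le)
      (fun a b c hab hbc => by simp only [hle, decide_eq_true_eq] at *; linarith)
      (fun a b => by simp only [hle, Bool.or_eq_true, decide_eq_true_eq]; exact le_total b a)
      (List.ofFn x)
  have hcount : k ≤ l.countP (fun a => decide (b ≤ a)) := by
    rw [hperm.countP_eq, List.ofFn_eq_map, List.countP_map]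
    have h1 : List.countP ((fun a => decide (b ≤ a)) ∘ x) (List.finRange n)
        = (Finset.univ.filter (fun i => b ≤ x i)).card := by
      rw [Fin.univ_def]
      simp [Finset.filter, Finset.card, List.countP_eq_length_filter,
        Multiset.filter_coe, Function.comp_def]
    rw [h1]
    exact hcard.trans (Finset.card_le_card (fun i hi => by
      simp only [Finset.mem_filter]; exact ⟨Finset.mem_univ i, hs i hi⟩))
  have hlenc : l.countP (fun a => decide (b ≤ a)) ≤ l.length := List.countP_le_length
  have hlt : k - 1 < l.length := by omega
  rw [List.getD_eq_getElem l 0 hlt]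
  by_contra hcon
  push_neg at hcon
  -- all elements from position k-1 on are < b
  have hdrop : (l.drop (k-1)).countP (fun a => decide (b ≤ a)) = 0 := by
    rw [List.countP_eq_zero]
    intro c hc
    obtain ⟨i, hi, hci⟩ := List.mem_iff_getElem.mp hc
    rw [List.getElem_drop] at hci
    have hcb : c ≤ l[k-1] := by
      rcases Nat.eq_zero_or_pos i with h0 | h0
      · subst h0; simp only [Nat.add_zero] at hci; rw [← hci]
      · have := (List.pairwise_iff_getElem.mp hsort) (k-1) (k-1+i) hlt
          (by rw [List.length_drop] at hi; omega) (by omega)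
        rw [hci] at this
        simpa [hle] using this
    simp only [decide_eq_true_eq]
    intro hbc
    exact absurd (hbc.trans hcb) (not_le.mpr hcon)
  have := List.take_append_drop (k-1) l
  have hsplit : l.countP (fun a => decide (b ≤ a))
      = (l.take (k-1)).countP (fun a => decide (b ≤ a))
        + (l.drop (k-1)).countP (fun a => decide (b ≤ a)) := by
    conv_lhs => rw [← this]
    rw [List.countP_append]
  have htake : (l.take (k-1)).countP (fun a => decide (b ≤ a)) ≤ k - 1 :=
    (List.countP_le_length).trans (by simp [List.length_take])
  omega

lemma sum_filter_val_lt {nn M : ℕ} (hM : M ≤ nn) (f : ℕ → ℝ) :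
    ∑ j ∈ Finset.univ.filter (fun j : Fin nn => j.val < M), f j.val
      = ∑ r ∈ Finset.range M, f r := by
  classical
  rw [Finset.sum_filter]
  rw [Fin.sum_univ_eq_sum_range (fun r => if r < M then f r else 0) nn]
  rw [← Finset.sum_filter]
  congr 1
  ext r
  simp only [Finset.mem_filter, Finset.mem_range]
  omega

lemma sum_range_mul_split (f : ℕ → ℝ) (q b : ℕ) :
    ∑ r ∈ Finset.range (q*b), f r
      = ∑ k ∈ Finset.range q, ∑ r ∈ Finset.range b, f (k*b + r) := by
  induction q with
  | zero => simp
  | succ q ih =>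
    have e2 : ∑ r ∈ Finset.Ico (q*b) (q*b+b), f r = ∑ r ∈ Finset.range b, f (q*b + r) := by
      rw [Finset.sum_Ico_eq_sum_range]
      have h2 : q*b + b - q*b = b := by omega
      rw [h2]
    have e1 : ∑ r ∈ Finset.range (q*b+b), f r
        = ∑ r ∈ Finset.range (q*b), f r + ∑ r ∈ Finset.Ico (q*b) (q*b+b), f r := by
      rw [Finset.range_eq_Ico,
        ← Finset.sum_Ico_consecutive f (Nat.zero_le (q*b)) (Nat.le_add_right (q*b) b),
        ← Finset.range_eq_Ico]
    rw [Nat.succ_mul, e1, e2, ih, Finset.sum_range_succ]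

lemma pairing_sum (ℓ : ℕ) (f : ℕ → ℝ) (hf0 : ∀ k, 0 ≤ f k)
    (hmono : ∀ k, 2 ≤ k → k ≤ ℓ - 1 → f k ≤ f (2*(k/2))) :
    ∑ k ∈ Finset.Icc 2 (ℓ-1), f k ≤ 2 * ∑ s ∈ Finset.Icc 1 (ℓ/2), f (2*s) := by
  classical
  have step1 : ∑ k ∈ Finset.Icc 2 (ℓ-1), f k ≤ ∑ k ∈ Finset.Icc 2 (ℓ-1), f (2*((k:ℕ)/2)) := by
    apply Finset.sum_le_sum
    intro k hk
    obtain ⟨h2, h3⟩ := Finset.mem_Icc.mp hk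
    exact hmono k h2 h3
  refine step1.trans ?_
  rw [Finset.sum_comp (fun s => f (2*s)) (fun k : ℕ => k/2)]
  have himg : (Finset.Icc 2 (ℓ-1)).image (fun k : ℕ => k/2) ⊆ Finset.Icc 1 (ℓ/2) := by
    intro s hs
    obtain ⟨k, hk, rfl⟩ := Finset.mem_image.mp hs
    obtain ⟨h2, h3⟩ := Finset.mem_Icc.mp hk
    rw [Finset.mem_Icc]
    omega
  calc ∑ s ∈ (Finset.Icc 2 (ℓ-1)).image (fun k : ℕ => k/2),
        ((Finset.Icc 2 (ℓ-1)).filter (fun k => k/2 = s)).card • f (2*s)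
      ≤ ∑ s ∈ (Finset.Icc 2 (ℓ-1)).image (fun k : ℕ => k/2), 2 * f (2*s) := by
        apply Finset.sum_le_sum
        intro s hs
        rw [nsmul_eq_mul]
        have hcard : ((Finset.Icc 2 (ℓ-1)).filter (fun k => k/2 = s)).card ≤ 2 := by
          have hsub : (Finset.Icc 2 (ℓ-1)).filter (fun k => k/2 = s) ⊆ {2*s, 2*s+1} := by
            intro k hk
            obtain ⟨-, hdiv⟩ := Finset.mem_filter.mp hk
            simp only [Finset.mem_insert, Finset.mem_singleton]
            omega
          exact (Finset.card_le_card hsub).trans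
            ((Finset.card_insert_le _ _).trans (by simp))
        have hc : ((((Finset.Icc 2 (ℓ-1)).filter (fun k => k/2 = s)).card : ℝ)) ≤ 2 := by
          exact_mod_cast hcard
        nlinarith [hf0 (2*s)]
      _ ≤ ∑ s ∈ Finset.Icc 1 (ℓ/2), 2 * f (2*s) :=
        Finset.sum_le_sum_of_subset_of_nonneg himg
          (fun s _ _ => mul_nonneg (by norm_num) (hf0 _))
      _ = 2 * ∑ s ∈ Finset.Icc 1 (ℓ/2), f (2*s) := by rw [Finset.mul_sum]

lemma pz_lemma {γ : Type*} [DecidableEq γ] (G : Finset γ) (X : γ → ℕ) (k : ℕ) (hk : 1 ≤ k)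
    (μ σ : ℝ) (hσ : 0 < σ) (hμk : (k:ℝ) - 1 ≤ μ)
    (hm1 : μ * G.card ≤ ∑ g ∈ G, (X g : ℝ))
    (hm2 : ∑ g ∈ G, (X g : ℝ)^2 ≤ σ * G.card) :
    (μ - ((k:ℝ) - 1))^2 / σ * G.card ≤ ((G.filter fun g => k ≤ X g).card : ℝ) := by
  classical
  have hk1 : (1:ℝ) ≤ (k:ℝ) := by exact_mod_cast hk
  set F := G.filter (fun g => k ≤ X g) with hF
  set S1 := ∑ g ∈ F, (X g : ℝ) with hS1
  have hsplit : ∑ g ∈ G, (X g : ℝ) = S1 + ∑ g ∈ G.filter (fun g => ¬ (k ≤ X g)), (X g : ℝ) :=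
    (Finset.sum_filter_add_sum_filter_not G _ _).symm
  have hrest : ∑ g ∈ G.filter (fun g => ¬ (k ≤ X g)), (X g : ℝ) ≤ ((k:ℝ)-1) * G.card := by
    calc ∑ g ∈ G.filter (fun g => ¬ (k ≤ X g)), (X g : ℝ)
        ≤ ∑ g ∈ G.filter (fun g => ¬ (k ≤ X g)), ((k:ℝ)-1) := by
          apply Finset.sum_le_sum
          intro g hg
          have h1 := (Finset.mem_filter.mp hg).2
          have h2 : X g + 1 ≤ k := by omega
          have h3 : (X g : ℝ) + 1 ≤ (k:ℝ) := by exact_mod_cast h2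
          linarith
      _ = ((k:ℝ)-1) * (G.filter (fun g => ¬ (k ≤ X g))).card := by
          rw [Finset.sum_const, nsmul_eq_mul, mul_comm]
      _ ≤ ((k:ℝ)-1) * G.card := by
          apply mul_le_mul_of_nonneg_left _ (by linarith : (0:ℝ) ≤ (k:ℝ)-1)
          exact_mod_cast Finset.card_le_card (Finset.filter_subset _ _)
  have hS1low : (μ - ((k:ℝ)-1)) * G.card ≤ S1 := by nlinarith
  have hS1nonneg : 0 ≤ (μ - ((k:ℝ)-1)) * G.card :=
    mul_nonneg (by linarith) (Nat.cast_nonneg _)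
  have hCS : S1^2 ≤ (σ * G.card) * F.card := by
    have h1 : S1^2 ≤ (∑ g ∈ F, (X g:ℝ)^2) * (∑ g ∈ F, (1:ℝ)^2) := by
      have := Finset.sum_mul_sq_le_sq_mul_sq F (fun g => (X g : ℝ)) (fun _ => (1:ℝ))
      simpa using this
    have h2 : ∑ g ∈ F, (X g:ℝ)^2 ≤ ∑ g ∈ G, (X g:ℝ)^2 :=
      Finset.sum_le_sum_of_subset_of_nonneg (Finset.filter_subset _ _)
        (fun _ _ _ => sq_nonneg _)
    have h3 : (∑ g ∈ F, (1:ℝ)^2) = F.card := by simp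
    calc S1^2 ≤ (∑ g ∈ F, (X g:ℝ)^2) * F.card := by rw [← h3]; exact h1
      _ ≤ (σ * G.card) * F.card :=
        mul_le_mul_of_nonneg_right (h2.trans hm2) (Nat.cast_nonneg _)
  have key : (μ - ((k:ℝ)-1))^2 * (G.card:ℝ)^2 ≤ (σ * G.card) * F.card := by
    nlinarith [pow_le_pow_left₀ hS1nonneg hS1low 2, hCS]
  rcases eq_or_lt_of_le (Nat.cast_nonneg (α := ℝ) G.card) with hG0 | hG0
  · rw [← hG0, mul_zero]
    exact Nat.cast_nonneg _
  · rw [div_mul_eq_mul_div, div_le_iff₀ hσ]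
    nlinarith [key, hG0]

lemma sum_filter_val_lt' {nn M : ℕ} (hM : M ≤ nn) (f : ℕ → ℝ) :
    ∑ j ∈ Finset.univ.filter (fun j : Fin nn => j.val < M), f j.val
      = ∑ r ∈ Finset.range M, f r := by
  classical
  rw [Finset.sum_filter]
  rw [Fin.sum_univ_eq_sum_range (fun r => if r < M then f r else 0) nn]
  rw [← Finset.sum_filter]
  congr 1
  ext r
  simp only [Finset.mem_filter, Finset.mem_range]
  omega

section
variable {n N : ℕ} (G : Finset (Fin n → Fin N)) (C : ℝ)
  (h : Fin (n*N) ≃ Fin n × Fin N) (M : ℕ)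

lemma moment_one (hM : M ≤ n*N)
    (hcard1 : ∀ p : Fin n × Fin N, ((G.filter fun g => g p.1 = p.2).card : ℝ) = G.card / N) :
    ∑ g ∈ G, (((Finset.univ.filter
        (fun j : Fin (n*N) => j.val < M ∧ g (h j).1 = (h j).2)).card : ℝ))
      = M * G.card / N := by
  classical
  have hXg : ∀ g : Fin n → Fin N, (((Finset.univ.filter
      (fun j : Fin (n*N) => j.val < M ∧ g (h j).1 = (h j).2)).card : ℝ))
      = ∑ j ∈ Finset.univ.filter (fun j : Fin (n*N) => j.val < M),
          (if g (h j).1 = (h j).2 then (1:ℝ) else 0) := by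
    intro g
    rw [← Finset.filter_filter, Finset.card_filter]
    push_cast
    rfl
  calc ∑ g ∈ G, (((Finset.univ.filter
        (fun j : Fin (n*N) => j.val < M ∧ g (h j).1 = (h j).2)).card : ℝ))
      = ∑ g ∈ G, ∑ j ∈ Finset.univ.filter (fun j : Fin (n*N) => j.val < M),
          (if g (h j).1 = (h j).2 then (1:ℝ) else 0) := by
        exact Finset.sum_congr rfl (fun g _ => hXg g)
    _ = ∑ j ∈ Finset.univ.filter (fun j : Fin (n*N) => j.val < M),
          ∑ g ∈ G, (if g (h j).1 = (h j).2 then (1:ℝ) else 0) := Finset.sum_comm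
    _ = ∑ j ∈ Finset.univ.filter (fun j : Fin (n*N) => j.val < M), (G.card : ℝ)/N := by
        apply Finset.sum_congr rfl
        intro j _
        rw [Finset.sum_boole]
        exact hcard1 (h j)
    _ = M * G.card / N := by
        have := sum_filter_val_lt' (nn := n*N) (M := M) hM (fun _ => (G.card : ℝ)/N)
        rw [this, Finset.sum_const, Finset.card_range, nsmul_eq_mul]
        ring

lemma moment_two (hM : M ≤ n*N) (hC : 0 ≤ C) (hN : 1 ≤ N)
    (hcard1 : ∀ p : Fin n × Fin N, ((G.filter fun g => g p.1 = p.2).card : ℝ) = G.card / N)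
    (hcard2 : ∀ p q : Fin n × Fin N, p ≠ q →
      ((G.filter fun g => g p.1 = p.2 ∧ g q.1 = q.2).card : ℝ) ≤ C * G.card / N^2) :
    ∑ g ∈ G, (((Finset.univ.filter
        (fun j : Fin (n*N) => j.val < M ∧ g (h j).1 = (h j).2)).card : ℝ))^2
      ≤ ((M:ℝ)/N + C*M^2/N^2) * G.card := by
  classical
  set J := Finset.univ.filter (fun j : Fin (n*N) => j.val < M) with hJ
  have hJcard : ((J.card : ℝ)) = M := by
    have := sum_filter_val_lt' (nn := n*N) (M := M) hM (fun _ => (1:ℝ))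
    simpa [← hJ] using this
  have hXg : ∀ g : Fin n → Fin N, (((Finset.univ.filter
      (fun j : Fin (n*N) => j.val < M ∧ g (h j).1 = (h j).2)).card : ℝ))
      = ∑ j ∈ J, (if g (h j).1 = (h j).2 then (1:ℝ) else 0) := by
    intro g
    rw [hJ, ← Finset.filter_filter, Finset.card_filter]
    push_cast
    rfl
  have step1 : ∑ g ∈ G, (((Finset.univ.filter
      (fun j : Fin (n*N) => j.val < M ∧ g (h j).1 = (h j).2)).card : ℝ))^2
      = ∑ j ∈ J, ∑ j' ∈ J,
          ((G.filter (fun g => g (h j).1 = (h j).2 ∧ g (h j').1 = (h j').2)).card : ℝ) := by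
    have e1 : ∀ g : Fin n → Fin N, (((Finset.univ.filter
        (fun j : Fin (n*N) => j.val < M ∧ g (h j).1 = (h j).2)).card : ℝ))^2
        = ∑ j ∈ J, ∑ j' ∈ J, (if g (h j).1 = (h j).2 ∧ g (h j').1 = (h j').2
            then (1:ℝ) else 0) := by
      intro g
      rw [hXg g, sq, Finset.sum_mul_sum]
      apply Finset.sum_congr rfl; intro j _
      apply Finset.sum_congr rfl; intro j' _
      split_ifs with h1 h2 h3 <;> simp_all
    rw [Finset.sum_congr rfl (fun g _ => e1 g)]
    rw [Finset.sum_comm]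
    apply Finset.sum_congr rfl; intro j _
    rw [Finset.sum_comm]
    apply Finset.sum_congr rfl; intro j' _
    rw [Finset.sum_boole]
  rw [step1]
  have hbound : ∀ j ∈ J, ∀ j' ∈ J,
      ((G.filter (fun g => g (h j).1 = (h j).2 ∧ g (h j').1 = (h j').2)).card : ℝ)
        ≤ if j = j' then (G.card:ℝ)/N else C * G.card / N^2 := by
    intro j _ j' _
    split_ifs with he
    · subst he
      have : (G.filter (fun g => g (h j).1 = (h j).2 ∧ g (h j).1 = (h j).2))
          = G.filter (fun g => g (h j).1 = (h j).2) := by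
        apply Finset.filter_congr; intro g _; simp
      rw [this, hcard1 (h j)]
    · apply hcard2 (h j) (h j')
      exact fun hc => he (h.injective (by
        apply Prod.ext <;> rw [hc]))
  calc ∑ j ∈ J, ∑ j' ∈ J,
        ((G.filter (fun g => g (h j).1 = (h j).2 ∧ g (h j').1 = (h j').2)).card : ℝ)
      ≤ ∑ j ∈ J, ∑ j' ∈ J, (if j = j' then (G.card:ℝ)/N else C * G.card / N^2) := by
        apply Finset.sum_le_sum; intro j hj
        apply Finset.sum_le_sum; intro j' hj'
        exact hbound j hj j' hj'
    _ = ∑ j ∈ J, ((J.card : ℝ) * (C * G.card / N^2)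
          + ((G.card:ℝ)/N - C * G.card / N^2)) := by
        apply Finset.sum_congr rfl; intro j hj
        have : ∀ j' : Fin (n*N), (if j = j' then (G.card:ℝ)/N else C * G.card / N^2)
            = C * G.card / N^2 + (if j = j' then (G.card:ℝ)/N - C * G.card / N^2 else 0) := by
          intro j'; split_ifs <;> ring
        rw [Finset.sum_congr rfl (fun j' _ => this j'), Finset.sum_add_distrib,
          Finset.sum_const, Finset.sum_ite_eq J j
            (fun _ => (G.card:ℝ)/N - C * G.card / N^2), if_pos hj, nsmul_eq_mul]
    _ ≤ ((M:ℝ)/N + C*M^2/N^2) * G.card := by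
        rw [Finset.sum_const, nsmul_eq_mul, hJcard]
        have hN0 : (0:ℝ) < N := by exact_mod_cast hN
        have hG0 : (0:ℝ) ≤ G.card := Nat.cast_nonneg _
        have hM0 : (0:ℝ) ≤ M := Nat.cast_nonneg _
        have hB0 : (0:ℝ) ≤ C * G.card / N^2 := by positivity
        have e : ((M:ℝ)/N + C*M^2/N^2) * G.card
            = (M:ℝ)*((G.card:ℝ)/N) + (M:ℝ)^2*(C*G.card/N^2) := by ring
        rw [e]
        nlinarith [mul_nonneg hM0 hB0]
end
lemma sum_range_add_split (f : ℕ → ℝ) (m b : ℕ) :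
    ∑ r ∈ Finset.range (m+b), f r = ∑ r ∈ Finset.range m, f r + ∑ r ∈ Finset.range b, f (m+r) := by
  have e2 : ∑ r ∈ Finset.Ico m (m+b), f r = ∑ r ∈ Finset.range b, f (m + r) := by
    rw [Finset.sum_Ico_eq_sum_range]
    have h2 : m + b - m = b := by omega
    rw [h2]
  rw [Finset.range_eq_Ico,
    ← Finset.sum_Ico_consecutive f (Nat.zero_le m) (Nat.le_add_right m b),
    ← Finset.range_eq_Ico, e2]

set_option maxHeartbeats 1000000 in
/-- Lemma 3.5: reduction to averaged (flat) matrices. If `a` is non-negative,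
supported on the positions `h(1),…,h(ℓN)` and decreasing along `h`, and `ã` is
the matrix with all these entries replaced by their average, then
`E S(ã) ≤ (8 + 16 C_G) E S(a)` where `S(b)(g) = ∑_{k=1}^ℓ kmax b_{i g(i)}`. -/
theorem stmt15 (n N ℓ : ℕ) (hℓ1 : 1 ≤ ℓ) (hℓ : ℓ ≤ n) (hN : 1 ≤ N)
    (G : Finset (Fin n → Fin N)) (hG : G.Nonempty)
    (C : ℝ) (hC : 1 ≤ C)
    (h1 : ∀ i : Fin n, ∀ j : Fin N,
      ((G.filter fun g => g i = j).card : ℝ) / G.card = 1 / N)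
    (h2 : ∀ p q : Fin n × Fin N, p ≠ q →
      ((G.filter fun g => g p.1 = p.2 ∧ g q.1 = q.2).card : ℝ) / G.card
        ≤ C / (N : ℝ) ^ 2)
    (h : Fin (n * N) ≃ Fin n × Fin N)
    (a : Fin n × Fin N → ℝ)
    (hpos : ∀ p, 0 ≤ a p)
    (hmono : ∀ j₁ j₂ : Fin (n * N), j₁ ≤ j₂ → j₂.val < ℓ * N → a (h j₂) ≤ a (h j₁))
    (hsupp : ∀ j : Fin (n * N), ℓ * N ≤ j.val → a (h j) = 0)
    (atil : Fin n × Fin N → ℝ)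
    (hatil : ∀ p, atil p =
      if (h.symm p).val < ℓ * N then
        (∑ j ∈ Finset.univ.filter (fun j : Fin (n * N) => j.val < ℓ * N), a (h j))
          / ((ℓ : ℝ) * N)
      else 0) :
    (∑ g ∈ G, ∑ k ∈ Finset.range ℓ, kmax (fun i => atil (i, g i)) (k + 1)) / G.card
      ≤ (8 + 16 * C) *
        ((∑ g ∈ G, ∑ k ∈ Finset.range ℓ, kmax (fun i => a (i, g i)) (k + 1)) / G.card) := by
  classical
  have hGc : (0:ℝ) < G.card := by exact_mod_cast Finset.card_pos.mpr hG
  have hNR : (0:ℝ) < N := by exact_mod_cast hN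
  have hℓR : (0:ℝ) < ℓ := by exact_mod_cast hℓ1
  have hC0 : (0:ℝ) ≤ C := by linarith
  have hmn : ℓ * N ≤ n * N := Nat.mul_le_mul_right N hℓ
  have hNlN : N ≤ ℓ * N := by calc N = 1*N := (one_mul N).symm
                                  _ ≤ ℓ*N := Nat.mul_le_mul_right N hℓ1
  have hℓN1 : 1 ≤ ℓ * N := le_trans hN hNlN
  -- card forms of the probability hypotheses
  have hcard1 : ∀ p : Fin n × Fin N,
      ((G.filter fun g => g p.1 = p.2).card : ℝ) = G.card / N := by
    intro p
    have h' := h1 p.1 p.2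
    rw [div_eq_div_iff (ne_of_gt hGc) (ne_of_gt hNR)] at h'
    rw [eq_div_iff (ne_of_gt hNR)]
    linarith
  have hcard2 : ∀ p q : Fin n × Fin N, p ≠ q →
      ((G.filter fun g => g p.1 = p.2 ∧ g q.1 = q.2).card : ℝ) ≤ C * G.card / N^2 := by
    intro p q hpq
    have h' := h2 p q hpq
    rw [div_le_div_iff₀ hGc (by positivity)] at h'
    rw [le_div_iff₀ (by positivity : (0:ℝ) < (N:ℝ)^2)]
    linarith
  -- the entry sequence
  obtain ⟨e, he⟩ : ∃ e : ℕ → ℝ, e = fun r => if hr : r < n*N then a (h ⟨r, hr⟩) else 0 :=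
    ⟨_, rfl⟩
  have he0 : ∀ r, 0 ≤ e r := by
    intro r; rw [he]; dsimp only; split
    · exact hpos _
    · exact le_refl 0
  have heval : ∀ j : Fin (n*N), a (h j) = e j.val := by
    intro j; rw [he]; dsimp only; rw [dif_pos j.isLt]
  have hemono : ∀ r1 r2 : ℕ, r1 ≤ r2 → r2 < ℓ*N → e r2 ≤ e r1 := by
    intro r1 r2 h12 hr2'
    have hr2 : r2 < n*N := lt_of_lt_of_le hr2' hmn
    have hr1 : r1 < n*N := by omega
    rw [he]; dsimp only; rw [dif_pos hr1, dif_pos hr2]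
    exact hmono ⟨r1, hr1⟩ ⟨r2, hr2⟩ h12 hr2'
  obtain ⟨T, hT⟩ : ∃ T : ℝ, T = ∑ r ∈ Finset.range (ℓ*N), e r := ⟨_, rfl⟩
  have hT0 : 0 ≤ T := by rw [hT]; exact Finset.sum_nonneg (fun r _ => he0 r)
  obtain ⟨A, hA⟩ : ∃ A : ℝ, A = T / ((ℓ:ℝ) * N) := ⟨_, rfl⟩
  have hA0 : 0 ≤ A := by rw [hA]; positivity
  have hatilA : ∀ p, atil p = if (h.symm p).val < ℓ*N then A else 0 := by
    intro p
    rw [hatil p]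
    have hTs : ∑ j ∈ Finset.univ.filter (fun j : Fin (n * N) => j.val < ℓ * N), a (h j) = T := by
      rw [hT, ← sum_filter_val_lt' hmn e]
      exact Finset.sum_congr rfl (fun j _ => heval j)
    rw [hTs, hA]
  have hatil_le : ∀ p, atil p ≤ A := by
    intro p; rw [hatilA p]; split
    · exact le_refl A
    · exact hA0
  -- notation for the two averages (numerators)
  obtain ⟨SL, hSL⟩ : ∃ SL : ℝ,
      SL = ∑ g ∈ G, ∑ k ∈ Finset.range ℓ, kmax (fun i => atil (i, g i)) (k + 1) := ⟨_, rfl⟩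
  obtain ⟨SR, hSR⟩ : ∃ SR : ℝ,
      SR = ∑ g ∈ G, ∑ k ∈ Finset.range ℓ, kmax (fun i => a (i, g i)) (k + 1) := ⟨_, rfl⟩
  have hSR0 : 0 ≤ SR := by
    rw [hSR]
    apply Finset.sum_nonneg; intro g _
    apply Finset.sum_nonneg; intro k _
    exact kmax_nonneg _ (fun i => hpos _) _
  -- LHS numerator bound
  have hLHS : SL ≤ G.card * (T / N) := by
    rw [hSL]
    calc ∑ g ∈ G, ∑ k ∈ Finset.range ℓ, kmax (fun i => atil (i, g i)) (k + 1)
        ≤ ∑ g ∈ G, ∑ _k ∈ Finset.range ℓ, A := by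
          apply Finset.sum_le_sum; intro g _
          apply Finset.sum_le_sum; intro k _
          exact kmax_le _ A hA0 (fun i => hatil_le _) _
      _ = G.card * ((ℓ:ℝ) * A) := by
          rw [Finset.sum_const, Finset.sum_const, Finset.card_range,
            nsmul_eq_mul, nsmul_eq_mul]
      _ = G.card * (T/N) := by
          rw [hA]; congr 1; field_simp
  -- generic lower bound via Paley--Zygmund
  have main_lb : ∀ (M k : ℕ), 1 ≤ k → 1 ≤ M → M ≤ ℓ*N → ((k:ℝ) - 1 ≤ (M:ℝ)/N) →
      e (M-1) * ((((M:ℝ)/N - ((k:ℝ)-1))^2 / ((M:ℝ)/N + C*(M:ℝ)^2/(N:ℝ)^2)) * G.card)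
        ≤ ∑ g ∈ G, kmax (fun i => a (i, g i)) k := by
    intro M k hk hM1 hMl hkM
    have hMn : M ≤ n*N := le_trans hMl hmn
    obtain ⟨X, hX⟩ : ∃ X : (Fin n → Fin N) → ℕ, X = fun g =>
      (Finset.univ.filter (fun j : Fin (n*N) => j.val < M ∧ g (h j).1 = (h j).2)).card :=
      ⟨_, rfl⟩
    have hm1 := moment_one G h M hMn hcard1
    have hm2 := moment_two G C h M hMn hC0 hN hcard1 hcard2
    have hMR : (0:ℝ) < (M:ℝ) := by exact_mod_cast hM1
    have hσ : (0:ℝ) < (M:ℝ)/N + C*(M:ℝ)^2/(N:ℝ)^2 := by positivity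
    have hm1' : (M:ℝ)/N * G.card ≤ ∑ g ∈ G, (X g : ℝ) := by
      rw [hX, div_mul_eq_mul_div]
      exact le_of_eq hm1.symm
    have hm2' : ∑ g ∈ G, (X g : ℝ)^2 ≤ ((M:ℝ)/N + C*(M:ℝ)^2/(N:ℝ)^2) * G.card := by
      rw [hX]; exact hm2
    have hpz := pz_lemma G X k hk ((M:ℝ)/N) ((M:ℝ)/N + C*(M:ℝ)^2/(N:ℝ)^2) hσ hkM hm1' hm2'
    have hstep : ∀ g ∈ G.filter (fun g => k ≤ X g),
        e (M-1) ≤ kmax (fun i => a (i, g i)) k := by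
      intro g hgF
      obtain ⟨hgG, hXk⟩ := Finset.mem_filter.mp hgF
      rw [hX] at hXk
      apply le_kmax _ _ k hk
        ((Finset.univ.filter
          (fun j : Fin (n*N) => j.val < M ∧ g (h j).1 = (h j).2)).image (fun j => (h j).1))
      · rw [Finset.card_image_of_injOn]
        · exact hXk
        · intro j hj j' hj' heq
          dsimp only at heq
          have hjf := (Finset.mem_filter.mp (Finset.mem_coe.mp hj)).2
          have hjf' := (Finset.mem_filter.mp (Finset.mem_coe.mp hj')).2
          apply h.injective
          apply Prod.ext heq
          rw [← hjf.2, ← hjf'.2, heq]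
      · intro i hi
        obtain ⟨j, hj, rfl⟩ := Finset.mem_image.mp hi
        have hjf := (Finset.mem_filter.mp hj).2
        have hjM : j.val < M := hjf.1
        have hjhit : g (h j).1 = (h j).2 := hjf.2
        show e (M-1) ≤ a ((h j).1, g ((h j).1))
        have hpe : ((h j).1, g ((h j).1)) = h j := by rw [hjhit]
        rw [hpe, heval j]
        exact hemono j.val (M-1) (Nat.le_pred_of_lt hjM)
          (Nat.lt_of_lt_of_le (Nat.sub_lt hM1 Nat.one_pos) hMl)
    calc e (M-1) * ((((M:ℝ)/N - ((k:ℝ)-1))^2 / ((M:ℝ)/N + C*(M:ℝ)^2/(N:ℝ)^2)) * G.card)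
        ≤ e (M-1) * ((G.filter (fun g => k ≤ X g)).card : ℝ) :=
          mul_le_mul_of_nonneg_left hpz (he0 (M-1))
      _ = ∑ _g ∈ G.filter (fun g => k ≤ X g), e (M-1) := by
          rw [Finset.sum_const, nsmul_eq_mul, mul_comm]
      _ ≤ ∑ g ∈ G.filter (fun g => k ≤ X g), kmax (fun i => a (i, g i)) k :=
          Finset.sum_le_sum hstep
      _ ≤ ∑ g ∈ G, kmax (fun i => a (i, g i)) k :=
          Finset.sum_le_sum_of_subset_of_nonneg (Finset.filter_subset _ _)
            (fun g _ _ => kmax_nonneg _ (fun i => hpos _) _)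
  -- head block setup
  obtain ⟨j0, hj0⟩ : ∃ j0 : ℕ, j0 = Nat.floor ((N:ℝ)/(2*C)) + 1 := ⟨_, rfl⟩
  have hj01 : 1 ≤ j0 := by omega
  have hj0cast : ((j0:ℕ):ℝ) = ((Nat.floor ((N:ℝ)/(2*C)) : ℕ):ℝ) + 1 := by
    rw [hj0]; push_cast; ring
  have hfl : ((Nat.floor ((N:ℝ)/(2*C)) : ℕ):ℝ) ≤ (N:ℝ)/(2*C) := Nat.floor_le (by positivity)
  have hj0fl : ((j0:ℝ) - 1) * C ≤ (N:ℝ)/2 := by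
    rw [hj0cast]
    have h' : ((Nat.floor ((N:ℝ)/(2*C)) : ℕ):ℝ) * C ≤ (N:ℝ)/(2*C) * C :=
      mul_le_mul_of_nonneg_right hfl hC0
    have heq : (N:ℝ)/(2*C) * C = N/2 := by field_simp
    rw [heq] at h'
    linarith
  have hj0N : j0 ≤ N := by
    by_contra hcon
    push_neg at hcon
    have h1' : (N:ℕ) ≤ Nat.floor ((N:ℝ)/(2*C)) := by omega
    have h2' : (N:ℝ) ≤ ((Nat.floor ((N:ℝ)/(2*C)) : ℕ):ℝ) := by exact_mod_cast h1'
    have h3' : (N:ℝ) ≤ (N:ℝ)/(2*C) := le_trans h2' hfl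
    have h4' := mul_le_mul_of_nonneg_right h3' (by linarith : (0:ℝ) ≤ 2*C)
    rw [div_mul_cancel₀ _ (by linarith : (2*C:ℝ) ≠ 0)] at h4'
    nlinarith
  have hNj0 : (N:ℝ) ≤ 2*C*j0 := by
    have h' := Nat.lt_floor_add_one ((N:ℝ)/(2*C))
    rw [← hj0cast] at h'
    have h'' := le_of_lt ((div_lt_iff₀ (by linarith : (0:ℝ) < 2*C)).mp h')
    nlinarith
  obtain ⟨T0, hT0def⟩ : ∃ T0 : ℝ, T0 = ∑ r ∈ Finset.range j0, e r := ⟨_, rfl⟩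
  have hT00 : 0 ≤ T0 := by rw [hT0def]; exact Finset.sum_nonneg (fun r _ => he0 r)
  -- head lower bound
  have hLB1 : T0 * ((G.card:ℝ)/(2*N)) ≤ ∑ g ∈ G, kmax (fun i => a (i, g i)) 1 := by
    have hj0nN : j0 ≤ n*N := le_trans (le_trans hj0N hNlN) hmn
    have hEvcard : ∀ j ∈ Finset.univ.filter (fun j : Fin (n*N) => j.val < j0),
        (G.card:ℝ)/(2*N) ≤ ((G.filter (fun g => g (h j).1 = (h j).2 ∧
          ∀ j' : Fin (n*N), j' < j → ¬ g (h j').1 = (h j').2)).card : ℝ) := by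
      intro j hjJ
      have hjlt : j.val < j0 := (Finset.mem_filter.mp hjJ).2
      have hsub : G.filter (fun g => g (h j).1 = (h j).2) ⊆
          (G.filter (fun g => g (h j).1 = (h j).2 ∧
            ∀ j' : Fin (n*N), j' < j → ¬ g (h j').1 = (h j').2))
          ∪ (Finset.Iio j).biUnion (fun j' =>
              G.filter (fun g => g (h j).1 = (h j).2 ∧ g (h j').1 = (h j').2)) := by
        intro g hg
        have hgG := (Finset.mem_filter.mp hg).1
        have hgh := (Finset.mem_filter.mp hg).2
        by_cases hall : ∀ j' : Fin (n*N), j' < j → ¬ g (h j').1 = (h j').2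
        · exact Finset.mem_union_left _ (Finset.mem_filter.mpr ⟨hgG, hgh, hall⟩)
        · push_neg at hall
          obtain ⟨j', hj', hhit⟩ := hall
          exact Finset.mem_union_right _ (Finset.mem_biUnion.mpr
            ⟨j', Finset.mem_Iio.mpr hj', Finset.mem_filter.mpr ⟨hgG, hgh, hhit⟩⟩)
      have hsum : (((Finset.Iio j).biUnion (fun j' =>
          G.filter (fun g => g (h j).1 = (h j).2 ∧ g (h j').1 = (h j').2))).card : ℝ)
          ≤ (j.val:ℝ) * (C * G.card / N^2) := by
        calc (((Finset.Iio j).biUnion _).card : ℝ)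
            ≤ ((∑ j' ∈ Finset.Iio j, (G.filter (fun g =>
                g (h j).1 = (h j).2 ∧ g (h j').1 = (h j').2)).card : ℕ) : ℝ) := by
              exact_mod_cast Finset.card_biUnion_le
          _ = ∑ j' ∈ Finset.Iio j, ((G.filter (fun g =>
                g (h j).1 = (h j).2 ∧ g (h j').1 = (h j').2)).card : ℝ) := by push_cast; rfl
          _ ≤ ∑ j' ∈ Finset.Iio j, C * G.card / N^2 := by
              apply Finset.sum_le_sum
              intro j' hj'
              exact hcard2 (h j) (h j')
                (fun hc => (Finset.mem_Iio.mp hj').ne (h.injective hc).symm)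
          _ = (j.val:ℝ) * (C * G.card / N^2) := by
              rw [Finset.sum_const, nsmul_eq_mul, Fin.card_Iio]
      have hcount : (G.card:ℝ)/N ≤ ((G.filter (fun g => g (h j).1 = (h j).2 ∧
          ∀ j' : Fin (n*N), j' < j → ¬ g (h j').1 = (h j').2)).card : ℝ)
          + (j.val:ℝ) * (C * G.card / N^2) := by
        rw [← hcard1 (h j)]
        calc ((G.filter (fun g => g (h j).1 = (h j).2)).card : ℝ)
            ≤ (((G.filter (fun g => g (h j).1 = (h j).2 ∧
                ∀ j' : Fin (n*N), j' < j → ¬ g (h j').1 = (h j').2))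
              ∪ (Finset.Iio j).biUnion (fun j' =>
                G.filter (fun g => g (h j).1 = (h j).2 ∧ g (h j').1 = (h j').2))).card : ℝ) := by
              exact_mod_cast Finset.card_le_card hsub
          _ ≤ ((G.filter (fun g => g (h j).1 = (h j).2 ∧
                ∀ j' : Fin (n*N), j' < j → ¬ g (h j').1 = (h j').2)).card : ℝ)
              + (((Finset.Iio j).biUnion (fun j' =>
                G.filter (fun g => g (h j).1 = (h j).2 ∧ g (h j').1 = (h j').2))).card : ℝ) := by
              exact_mod_cast Finset.card_union_le _ _
          _ ≤ _ + (j.val:ℝ) * (C * G.card / N^2) := by linarith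
      have hjb : (j.val:ℝ) * C ≤ (N:ℝ)/2 := by
        have hj1 : (j.val:ℝ) ≤ (j0:ℝ) - 1 := by
          have : j.val ≤ j0 - 1 := by omega
          have h' : ((j.val:ℕ):ℝ) ≤ ((j0-1:ℕ):ℝ) := by exact_mod_cast this
          have h'' : ((j0-1:ℕ):ℝ) = (j0:ℝ) - 1 := by
            have : (1:ℕ) ≤ j0 := hj01
            push_cast [Nat.cast_sub this]
            ring
          linarith [h''.symm ▸ h']
        calc (j.val:ℝ) * C ≤ ((j0:ℝ)-1) * C := mul_le_mul_of_nonneg_right hj1 hC0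
          _ ≤ (N:ℝ)/2 := hj0fl
      have hsmall : (j.val:ℝ) * (C * G.card / N^2) ≤ (G.card:ℝ)/(2*N) := by
        have h' := mul_le_mul_of_nonneg_right hjb
          (by clear he heval hemono; positivity : (0:ℝ) ≤ (G.card:ℝ)/N^2)
        calc (j.val:ℝ) * (C * G.card / N^2) = (j.val:ℝ) * C * ((G.card:ℝ)/N^2) := by ring
          _ ≤ (N:ℝ)/2 * ((G.card:ℝ)/N^2) := h'
          _ = (G.card:ℝ)/(2*N) := by clear he heval hemono; field_simp
      have hhalf : (G.card:ℝ)/N = (G.card:ℝ)/(2*N) + (G.card:ℝ)/(2*N) := by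
        clear he heval hemono; field_simp; ring
      linarith
    -- pointwise bound
    have hpoint : ∀ g ∈ G,
        ∑ j ∈ Finset.univ.filter (fun j : Fin (n*N) => j.val < j0),
          (if (g (h j).1 = (h j).2 ∧
            ∀ j' : Fin (n*N), j' < j → ¬ g (h j').1 = (h j').2) then e j.val else 0)
        ≤ kmax (fun i => a (i, g i)) 1 := by
      intro g _
      by_cases hex : ∃ j ∈ Finset.univ.filter (fun j : Fin (n*N) => j.val < j0),
          (g (h j).1 = (h j).2 ∧ ∀ j' : Fin (n*N), j' < j → ¬ g (h j').1 = (h j').2)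
      · obtain ⟨js, hjsJ, hPjs⟩ := hex
        have hz : ∀ j ∈ Finset.univ.filter (fun j : Fin (n*N) => j.val < j0), j ≠ js →
            (if (g (h j).1 = (h j).2 ∧
              ∀ j' : Fin (n*N), j' < j → ¬ g (h j').1 = (h j').2) then e j.val else 0) = 0 := by
          intro j _ hne
          rw [if_neg]
          intro hPj
          rcases lt_trichotomy j js with hlt | heq | hgt
          · exact hPjs.2 j hlt hPj.1
          · exact hne heq
          · exact hPj.2 js hgt hPjs.1
        rw [Finset.sum_eq_single_of_mem js hjsJ hz, if_pos hPjs]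
        apply le_kmax _ _ 1 le_rfl {(h js).1} (by simp)
        intro i hi
        rw [Finset.mem_singleton] at hi
        subst hi
        show e js.val ≤ a ((h js).1, g ((h js).1))
        have hpe : ((h js).1, g ((h js).1)) = h js := by rw [hPjs.1]
        rw [hpe, heval js]
      · have : ∑ j ∈ Finset.univ.filter (fun j : Fin (n*N) => j.val < j0),
            (if (g (h j).1 = (h j).2 ∧
              ∀ j' : Fin (n*N), j' < j → ¬ g (h j').1 = (h j').2) then e j.val else 0) = 0 := by
          apply Finset.sum_eq_zero
          intro j hj
          rw [if_neg (fun hP => hex ⟨j, hj, hP⟩)]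
        rw [this]
        exact kmax_nonneg _ (fun i => hpos _) 1
    -- assemble head bound
    calc T0 * ((G.card:ℝ)/(2*N))
        = ∑ j ∈ Finset.univ.filter (fun j : Fin (n*N) => j.val < j0),
            e j.val * ((G.card:ℝ)/(2*N)) := by
          rw [hT0def, ← Finset.sum_mul, sum_filter_val_lt' hj0nN e]
      _ ≤ ∑ j ∈ Finset.univ.filter (fun j : Fin (n*N) => j.val < j0),
            e j.val * ((G.filter (fun g => g (h j).1 = (h j).2 ∧
              ∀ j' : Fin (n*N), j' < j → ¬ g (h j').1 = (h j').2)).card : ℝ) := by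
          apply Finset.sum_le_sum
          intro j hj
          exact mul_le_mul_of_nonneg_left (hEvcard j hj) (he0 j.val)
      _ = ∑ j ∈ Finset.univ.filter (fun j : Fin (n*N) => j.val < j0),
            ∑ g ∈ G, (if (g (h j).1 = (h j).2 ∧
              ∀ j' : Fin (n*N), j' < j → ¬ g (h j').1 = (h j').2) then e j.val else 0) := by
          apply Finset.sum_congr rfl
          intro j _
          rw [← Finset.sum_filter, Finset.sum_const, nsmul_eq_mul, mul_comm]
      _ = ∑ g ∈ G, ∑ j ∈ Finset.univ.filter (fun j : Fin (n*N) => j.val < j0),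
            (if (g (h j).1 = (h j).2 ∧
              ∀ j' : Fin (n*N), j' < j → ¬ g (h j').1 = (h j').2) then e j.val else 0) :=
          Finset.sum_comm
      _ ≤ ∑ g ∈ G, kmax (fun i => a (i, g i)) 1 := Finset.sum_le_sum hpoint
  -- kmax sums sit inside SR
  have hK1 : ∑ g ∈ G, kmax (fun i => a (i, g i)) 1 ≤ SR := by
    rw [hSR]
    apply Finset.sum_le_sum
    intro g _
    have := Finset.single_le_sum (f := fun k => kmax (fun i => a (i, g i)) (k+1))
      (fun k _ => kmax_nonneg _ (fun i => hpos _) _) (Finset.mem_range.mpr hℓ1)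
    simpa using this
  have hKs : ∑ s ∈ Finset.Icc 1 (ℓ/2), ∑ g ∈ G, kmax (fun i => a (i, g i)) s ≤ SR := by
    have hswap : SR = ∑ k ∈ Finset.range ℓ, ∑ g ∈ G, kmax (fun i => a (i, g i)) (k+1) := by
      rw [hSR]; exact Finset.sum_comm
    rw [hswap]
    have hIcc : Finset.Icc 1 (ℓ/2) = Finset.Ico 1 (ℓ/2 + 1) := (Finset.Ico_add_one_right_eq_Icc ..).symm
    rw [hIcc, Finset.sum_Ico_eq_sum_range]
    have hle : ℓ/2 + 1 - 1 = ℓ/2 := by omega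
    rw [hle]
    have hsub : Finset.range (ℓ/2) ⊆ Finset.range ℓ :=
      Finset.range_subset_range.mpr (by omega)
    calc ∑ k ∈ Finset.range (ℓ/2), ∑ g ∈ G, kmax (fun i => a (i, g i)) (1+k)
        = ∑ k ∈ Finset.range (ℓ/2), ∑ g ∈ G, kmax (fun i => a (i, g i)) (k+1) := by
          apply Finset.sum_congr rfl; intro k _; rw [Nat.add_comm]
      _ ≤ ∑ k ∈ Finset.range ℓ, ∑ g ∈ G, kmax (fun i => a (i, g i)) (k+1) :=
          Finset.sum_le_sum_of_subset_of_nonneg hsub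
            (fun k _ _ => Finset.sum_nonneg (fun g _ => kmax_nonneg _ (fun i => hpos _) _))
  -- specialized lower bounds
  have hLB2 : e (N-1) * ((G.card:ℝ)/(1+C)) ≤ SR := by
    have hml := main_lb N 1 le_rfl hN hNlN
      (by rw [div_self (ne_of_gt hNR)]; norm_num)
    rw [Nat.cast_one] at hml
    have hconst : (((N:ℝ)/N - ((1:ℝ)-1))^2 / ((N:ℝ)/N + C*(N:ℝ)^2/(N:ℝ)^2)) = 1/(1+C) := by
      rw [div_self (ne_of_gt hNR)]
      rw [mul_div_assoc, div_self (by positivity : ((N:ℝ)^2) ≠ 0)]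
      norm_num
    rw [hconst] at hml
    have : e (N-1) * ((G.card:ℝ)/(1+C)) = e (N-1) * (1/(1+C) * G.card) := by ring
    rw [this]
    exact le_trans hml hK1
  have hLB3 : (∑ s ∈ Finset.Icc 1 (ℓ/2), e (2*s*N - 1)) * ((G.card:ℝ)/(2+4*C)) ≤ SR := by
    have hterm : ∀ s ∈ Finset.Icc 1 (ℓ/2),
        e (2*s*N - 1) * ((G.card:ℝ)/(2+4*C)) ≤ ∑ g ∈ G, kmax (fun i => a (i, g i)) s := by
      intro s hs
      obtain ⟨hs1, hs2⟩ := Finset.mem_Icc.mp hs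
      have h2sl : 2*s ≤ ℓ := by omega
      have hMl : 2*s*N ≤ ℓ*N := Nat.mul_le_mul_right N h2sl
      have hM1 : 1 ≤ 2*s*N := by
        have : 1*1 ≤ (2*s)*N := Nat.mul_le_mul (by omega) hN
        omega
      have hsR : (1:ℝ) ≤ (s:ℝ) := by exact_mod_cast hs1
      have hcast : ((2*s*N : ℕ):ℝ) = 2*(s:ℝ)*(N:ℝ) := by push_cast; ring
      have hkM : (s:ℝ) - 1 ≤ ((2*s*N:ℕ):ℝ)/N := by
        rw [hcast]
        have : 2*(s:ℝ)*(N:ℝ)/N = 2*s := by field_simp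
        rw [this]; linarith
      have hml := main_lb (2*s*N) s hs1 hM1 hMl hkM
      have hsimp1 : ((2*s*N:ℕ):ℝ)/N = 2*(s:ℝ) := by rw [hcast]; field_simp
      have hsimp2 : C*((2*s*N:ℕ):ℝ)^2/(N:ℝ)^2 = 4*C*(s:ℝ)^2 := by
        rw [hcast]; field_simp; ring
      rw [hsimp1, hsimp2] at hml
      have hconst : 1/(2+4*C) ≤ (2*(s:ℝ) - ((s:ℝ)-1))^2 / (2*(s:ℝ) + 4*C*(s:ℝ)^2) := by
        rw [div_le_div_iff₀ (by linarith) (by nlinarith)]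
        nlinarith
      calc e (2*s*N - 1) * ((G.card:ℝ)/(2+4*C))
          = e (2*s*N - 1) * (1/(2+4*C) * G.card) := by ring
        _ ≤ e (2*s*N - 1) * ((2*(s:ℝ) - ((s:ℝ)-1))^2 / (2*(s:ℝ) + 4*C*(s:ℝ)^2) * G.card) := by
            apply mul_le_mul_of_nonneg_left _ (he0 _)
            exact mul_le_mul_of_nonneg_right hconst (le_of_lt hGc)
        _ ≤ ∑ g ∈ G, kmax (fun i => a (i, g i)) s := hml
    calc (∑ s ∈ Finset.Icc 1 (ℓ/2), e (2*s*N - 1)) * ((G.card:ℝ)/(2+4*C))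
        = ∑ s ∈ Finset.Icc 1 (ℓ/2), e (2*s*N - 1) * ((G.card:ℝ)/(2+4*C)) :=
          Finset.sum_mul _ _ _
      _ ≤ ∑ s ∈ Finset.Icc 1 (ℓ/2), ∑ g ∈ G, kmax (fun i => a (i, g i)) s :=
          Finset.sum_le_sum hterm
      _ ≤ SR := hKs
  -- decompose T
  have hsplitT : T ≤ (1+2*C) * T0
      + (N:ℝ) * (e (N-1) + 2 * ∑ s ∈ Finset.Icc 1 (ℓ/2), e (2*s*N - 1)) := by
    -- T = head block + rest
    have hEqn : ℓ*N = N + (ℓ-1)*N := by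
      have : (ℓ-1)*N = ℓ*N - N := by rw [Nat.sub_mul, one_mul]
      omega
    have hTsplit : T = (∑ r ∈ Finset.range N, e r)
        + ∑ r ∈ Finset.range ((ℓ-1)*N), e (N + r) := by
      rw [hT, hEqn, sum_range_add_split]
    -- rest ≤ N * sum of block minima
    have hrest : ∑ r ∈ Finset.range ((ℓ-1)*N), e (N + r)
        ≤ (N:ℝ) * ∑ k ∈ Finset.range (ℓ-1), e ((k+1)*N - 1) := by
      rw [sum_range_mul_split (fun r => e (N + r)) (ℓ-1) N, Finset.mul_sum]
      apply Finset.sum_le_sum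
      intro k hk
      have hkl : k < ℓ - 1 := Finset.mem_range.mp hk
      calc ∑ r ∈ Finset.range N, e (N + (k*N + r))
          ≤ ∑ _r ∈ Finset.range N, e ((k+1)*N - 1) := by
            apply Finset.sum_le_sum
            intro r hr
            have hrN : r < N := Finset.mem_range.mp hr
            apply hemono
            · have : (k+1)*N = N + k*N := by ring
              omega
            · have h1' : (k+2) ≤ ℓ := by omega
              have h2' : (k+2)*N ≤ ℓ*N := Nat.mul_le_mul_right N h1'
              have h3' : (k+2)*N = N + k*N + N := by ring
              omega
        _ = (N:ℝ) * e ((k+1)*N - 1) := by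
            rw [Finset.sum_const, Finset.card_range, nsmul_eq_mul]
    -- reindex block minima
    have hreidx : ∑ k ∈ Finset.range (ℓ-1), e ((k+1)*N - 1)
        = ∑ k ∈ Finset.Icc 1 (ℓ-1), e (k*N - 1) := by
      have h1' : Finset.Icc 1 (ℓ-1) = Finset.Ico 1 ℓ := by
        rw [← Finset.Ico_add_one_right_eq_Icc]
        congr 1
        omega
      rw [h1', Finset.sum_Ico_eq_sum_range]
      apply Finset.sum_congr rfl
      intro k _
      congr 2
      ring
    -- split off the first block minimum
    have hsplit2 : ∑ k ∈ Finset.Icc 1 (ℓ-1), e (k*N - 1)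
        ≤ e (N-1) + ∑ k ∈ Finset.Icc 2 (ℓ-1), e (k*N - 1) := by
      rcases Nat.lt_or_ge ℓ 2 with hl2 | hl2
      · have h1' : Finset.Icc 1 (ℓ-1) = ∅ := by
          apply Finset.Icc_eq_empty; omega
        have h2' : Finset.Icc 2 (ℓ-1) = ∅ := by
          apply Finset.Icc_eq_empty; omega
        rw [h1', h2']
        simp [he0 (N-1)]
      · have h1' : Finset.Icc 1 (ℓ-1) = insert 1 (Finset.Icc 2 (ℓ-1)) := by
          ext r
          simp only [Finset.mem_Icc, Finset.mem_insert]
          omega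
        rw [h1', Finset.sum_insert (by simp [Finset.mem_Icc])]
        rw [one_mul]
    -- pairing
    have hpair : ∑ k ∈ Finset.Icc 2 (ℓ-1), e (k*N - 1)
        ≤ 2 * ∑ s ∈ Finset.Icc 1 (ℓ/2), e (2*s*N - 1) := by
      have := pairing_sum ℓ (fun k => e (k*N - 1)) (fun k => he0 _) ?_
      · exact this
      · intro k hk2 hkl
        apply hemono
        · have h1' : 2*(k/2) ≤ k := by omega
          have h2' : (2*(k/2))*N ≤ k*N := Nat.mul_le_mul_right N h1'
          have h3' : 1*1 ≤ (2*(k/2))*N := Nat.mul_le_mul (by omega) hN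
          omega
        · have h1' : k ≤ ℓ - 1 := hkl
          have h2' : k*N ≤ (ℓ-1)*N := Nat.mul_le_mul_right N h1'
          have h3' : (ℓ-1)*N + N = ℓ*N := by
            have : (ℓ-1)*N = ℓ*N - N := by rw [Nat.sub_mul, one_mul]
            omega
          omega
    -- head block bound
    have hP1 : ∑ r ∈ Finset.range N, e r ≤ (1+2*C) * T0 := by
      have hNsp : N = j0 + (N - j0) := by omega
      have hsp : ∑ r ∈ Finset.range N, e r
          = T0 + ∑ r ∈ Finset.range (N - j0), e (j0 + r) := by
        rw [hT0def]
        conv_lhs => rw [hNsp]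
        exact sum_range_add_split e j0 (N - j0)
      have htail : ∑ r ∈ Finset.range (N - j0), e (j0 + r) ≤ (N:ℝ) * e (j0-1) := by
        calc ∑ r ∈ Finset.range (N - j0), e (j0 + r)
            ≤ ∑ _r ∈ Finset.range (N - j0), e (j0-1) := by
              apply Finset.sum_le_sum
              intro r hr
              apply hemono (j0-1) (j0+r) (by omega)
              have : r < N - j0 := Finset.mem_range.mp hr
              omega
          _ = ((N - j0 : ℕ):ℝ) * e (j0-1) := by
              rw [Finset.sum_const, Finset.card_range, nsmul_eq_mul]
          _ ≤ (N:ℝ) * e (j0-1) := by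
              apply mul_le_mul_of_nonneg_right _ (he0 _)
              exact_mod_cast Nat.sub_le N j0
      have hj0T0 : (j0:ℝ) * e (j0-1) ≤ T0 := by
        calc (j0:ℝ) * e (j0-1) = ∑ _r ∈ Finset.range j0, e (j0-1) := by
              rw [Finset.sum_const, Finset.card_range, nsmul_eq_mul]
          _ ≤ ∑ r ∈ Finset.range j0, e r := by
              apply Finset.sum_le_sum
              intro r hr
              apply hemono r (j0-1) (by have := Finset.mem_range.mp hr; omega)
              omega
          _ = T0 := hT0def.symm
      have hNe : (N:ℝ) * e (j0-1) ≤ 2*C*T0 := by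
        have h1' : (N:ℝ) * e (j0-1) ≤ (2*C*(j0:ℝ)) * e (j0-1) :=
          mul_le_mul_of_nonneg_right hNj0 (he0 _)
        have h2' : (2*C) * ((j0:ℝ) * e (j0-1)) ≤ (2*C) * T0 :=
          mul_le_mul_of_nonneg_left hj0T0 (by linarith)
        nlinarith
      rw [hsp]
      linarith
    -- combine
    have hcomb : (N:ℝ) * ∑ k ∈ Finset.range (ℓ-1), e ((k+1)*N - 1)
        ≤ (N:ℝ) * (e (N-1) + 2 * ∑ s ∈ Finset.Icc 1 (ℓ/2), e (2*s*N - 1)) := by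
      apply mul_le_mul_of_nonneg_left _ (le_of_lt hNR)
      rw [hreidx]
      linarith [hsplit2, hpair]
    rw [hTsplit]
    linarith [hrest, hP1, hcomb]
  -- final assembly
  have hT0Sg : T0 * (G.card:ℝ) ≤ 2*(N:ℝ) * SR := by
    have h' := hLB1.trans hK1
    have h'' : T0 * ((G.card:ℝ)/(2*N)) * (2*N) ≤ SR * (2*N) :=
      mul_le_mul_of_nonneg_right h' (by positivity)
    calc T0 * (G.card:ℝ) = T0 * ((G.card:ℝ)/(2*N)) * (2*N) := by
          clear he heval hemono; field_simp
      _ ≤ SR * (2*N) := h''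
      _ = 2*(N:ℝ) * SR := by ring
  have hB1Sg : e (N-1) * (G.card:ℝ) ≤ (1+C) * SR := by
    have h'' : e (N-1) * ((G.card:ℝ)/(1+C)) * (1+C) ≤ SR * (1+C) :=
      mul_le_mul_of_nonneg_right hLB2 (by linarith)
    calc e (N-1) * (G.card:ℝ) = e (N-1) * ((G.card:ℝ)/(1+C)) * (1+C) := by
          clear he heval hemono; field_simp
      _ ≤ SR * (1+C) := h''
      _ = (1+C) * SR := by ring
  have hB2Sg : (∑ s ∈ Finset.Icc 1 (ℓ/2), e (2*s*N - 1)) * (G.card:ℝ) ≤ (2+4*C) * SR := by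
    have h'' : (∑ s ∈ Finset.Icc 1 (ℓ/2), e (2*s*N - 1)) * ((G.card:ℝ)/(2+4*C)) * (2+4*C)
        ≤ SR * (2+4*C) := mul_le_mul_of_nonneg_right hLB3 (by linarith)
    calc (∑ s ∈ Finset.Icc 1 (ℓ/2), e (2*s*N - 1)) * (G.card:ℝ)
          = (∑ s ∈ Finset.Icc 1 (ℓ/2), e (2*s*N - 1)) * ((G.card:ℝ)/(2+4*C)) * (2+4*C) := by
          clear he heval hemono; field_simp
      _ ≤ SR * (2+4*C) := h''
      _ = (2+4*C) * SR := by ring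
  have hfinal : SL ≤ (8 + 16*C) * SR := by
    have t1 : (G.card:ℝ) * (T/N) ≤ ((1+2*C) * T0
        + (N:ℝ) * (e (N-1) + 2 * ∑ s ∈ Finset.Icc 1 (ℓ/2), e (2*s*N - 1))) * ((G.card:ℝ)/N) := by
      have := mul_le_mul_of_nonneg_right hsplitT (by clear he heval hemono; positivity : (0:ℝ) ≤ (G.card:ℝ)/N)
      calc (G.card:ℝ) * (T/N) = T * ((G.card:ℝ)/N) := by clear he heval hemono; field_simp
        _ ≤ _ := this
    have expand : ((1+2*C) * T0
        + (N:ℝ) * (e (N-1) + 2 * ∑ s ∈ Finset.Icc 1 (ℓ/2), e (2*s*N - 1))) * ((G.card:ℝ)/N)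
        = (1+2*C)/N * (T0 * G.card) + (e (N-1) * G.card)
          + 2*((∑ s ∈ Finset.Icc 1 (ℓ/2), e (2*s*N - 1)) * G.card) := by
      clear he heval hemono; field_simp
      ring
    have b1 : (1+2*C)/N * (T0 * G.card) ≤ (1+2*C)/N * (2*(N:ℝ)*SR) :=
      mul_le_mul_of_nonneg_left hT0Sg (by positivity)
    have b1' : (1+2*C)/N * (2*(N:ℝ)*SR) = 2*(1+2*C)*SR := by
      field_simp
    have hchain : SL ≤ (7+13*C) * SR := by
      calc SL ≤ (G.card:ℝ) * (T/N) := hLHS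
        _ ≤ _ := t1
        _ = (1+2*C)/N * (T0 * G.card) + (e (N-1) * G.card)
            + 2*((∑ s ∈ Finset.Icc 1 (ℓ/2), e (2*s*N - 1)) * G.card) := expand
        _ ≤ 2*(1+2*C)*SR + (1+C)*SR + 2*((2+4*C)*SR) := by
            have := b1.trans (le_of_eq b1')
            linarith [hB1Sg, hB2Sg]
        _ = (7+13*C) * SR := by ring
    calc SL ≤ (7+13*C) * SR := hchain
      _ ≤ (8 + 16*C) * SR := by nlinarith
  rw [← hSL, ← hSR, ← mul_div_assoc]
  exact div_le_div_of_nonneg_right hfinal (le_of_lt hGc)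
end

section
/- Let $a \in \R^{n\times N}$, $1 \le p < \infty$, and let $G$ be a finite collection of maps $g:\{1,\dots,n\}\to\{1,\dots,N\}$ with uniform probability satisfying $\Pro(g(i)=j)=1/N$ for all $i,j$. Then $\E\Big(\sum_{i=1}^n |a_{ig(i)}|^p\Big)^{1/p} \le \frac{1}{N}\sum_{k=1}^N s(k) + \Big(\frac{1}{N}\sum_{k=N+1}^{nN} s(k)^p\Big)^{1/p}$, where $(s(k))_{k=1}^{nN}$ is the decreasing rearrangement of $(|a_{ij}|)$. -/
lemma perm_lift {α β : Type*} [DecidableEq α] (f : α → β) :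
    ∀ (l' : List β) (l : List α), l'.Perm (l.map f) →
      ∃ l'' : List α, l''.Perm l ∧ l''.map f = l' := by
  intro l'
  induction l' with
  | nil =>
    intro l h
    have : l.map f = [] := h.symm.eq_nil
    have : l = [] := by simpa using this
    exact ⟨[], by simp [this], by simp⟩
  | cons b t ih =>
    intro l h
    have hb : b ∈ l.map f := h.mem_iff.mp (by simp)
    obtain ⟨x, hx, hfx⟩ := List.mem_map.mp hb
    have hperm : (l.map f).Perm (f x :: (l.erase x).map f) := by
      rw [← List.map_cons]
      exact (List.perm_cons_erase hx).map f
    have h2 : t.Perm ((l.erase x).map f) := by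
      have := h.trans hperm
      rw [← hfx] at this
      exact this.cons_inv
    obtain ⟨l'', hl'', hmap⟩ := ih (l.erase x) h2
    exact ⟨x :: l'', (hl''.cons x).trans (List.perm_cons_erase hx).symm,
      by simp [hmap, hfx]⟩

lemma sum_range_getD (l : List ℝ) (m : ℕ) :
    ∑ k ∈ Finset.range m, l.getD k 0 = (l.take m).sum := by
  induction m with
  | zero => simp
  | succ m ih =>
    rw [Finset.sum_range_succ, ih, List.take_succ, List.sum_append]
    cases h : l[m]? <;> simp [List.getD, h]

lemma list_sum_map_getD (l : List ℝ) (h : ℝ → ℝ) :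
    ∑ k ∈ Finset.range l.length, h (l.getD k 0) = (l.map h).sum := by
  induction l with
  | nil => simp
  | cons x t ih =>
    rw [List.length_cons, Finset.sum_range_succ']
    simp only [List.getD] at ih ⊢
    simp [ih, add_comm]

lemma real_add_rpow_le {x y p : ℝ} (hx : 0 ≤ x) (hy : 0 ≤ y) (hp : 1 ≤ p) :
    x ^ p + y ^ p ≤ (x + y) ^ p := by
  rw [← Real.coe_toNNReal x hx, ← Real.coe_toNNReal y hy, ← NNReal.coe_rpow, ← NNReal.coe_rpow,
    ← NNReal.coe_add, ← NNReal.coe_add, ← NNReal.coe_rpow, NNReal.coe_le_coe]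
  exact NNReal.add_rpow_le_rpow_add _ _ hp

lemma sum_rpow_le_rpow_sum {ι : Type*} (s : Finset ι) (f : ι → ℝ) {p : ℝ}
    (hf : ∀ i ∈ s, 0 ≤ f i) (hp : 1 ≤ p) :
    ∑ i ∈ s, f i ^ p ≤ (∑ i ∈ s, f i) ^ p := by
  classical
  induction s using Finset.cons_induction with
  | empty => simp [Real.zero_rpow (by linarith : p ≠ 0)]
  | cons a s ha ih =>
    rw [Finset.sum_cons, Finset.sum_cons]
    calc f a ^ p + ∑ i ∈ s, f i ^ p ≤ f a ^ p + (∑ i ∈ s, f i) ^ p := by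
          gcongr
          exact ih (fun i hi => hf i (Finset.mem_cons_of_mem hi))
      _ ≤ (f a + ∑ i ∈ s, f i) ^ p :=
          real_add_rpow_le (hf a (Finset.mem_cons_self _ _))
            (Finset.sum_nonneg fun i hi => hf i (Finset.mem_cons_of_mem hi)) hp

/-- `smat a k` is the `k`-th largest entry (1-indexed) of `(|a i j|)`. -/
noncomputable def smat {n N : ℕ} (a : Fin n → Fin N → ℝ) (k : ℕ) : ℝ :=
  (((Finset.univ : Finset (Fin n × Fin N)).toList.map
      (fun p => |a p.1 p.2|)).mergeSort (fun a b => decide (b ≤ a))).getD (k - 1) 0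

/-- Upper bound of Theorem 1.2:
`E (∑ᵢ |a_{i g(i)}|^p)^{1/p} ≤ N⁻¹ ∑_{k=1}^N s(k) + (N⁻¹ ∑_{k=N+1}^{nN} s(k)^p)^{1/p}`. -/
theorem stmt16 (n N : ℕ) (a : Fin n → Fin N → ℝ) (p : ℝ) (hp : 1 ≤ p)
    (G : Finset (Fin n → Fin N)) (hG : G.Nonempty)
    (h1 : ∀ i : Fin n, ∀ j : Fin N,
      ((G.filter fun g => g i = j).card : ℝ) / G.card = 1 / N) :
    (∑ g ∈ G, (∑ i, |a i (g i)| ^ p) ^ (1 / p)) / G.card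
      ≤ (1 / N) * ∑ k ∈ Finset.range N, smat a (k + 1)
        + ((1 / N) * ∑ k ∈ Finset.Icc (N + 1) (n * N), smat a k ^ p) ^ (1 / p) := by
  classical
  have hp0 : 0 < p := lt_of_lt_of_le one_pos hp
  have hp0' : p ≠ 0 := ne_of_gt hp0
  have hip : (1 : ℝ)/p ≠ 0 := one_div_ne_zero hp0'
  -- trivial case n = 0
  rcases Nat.eq_zero_or_pos n with hn | hn
  · subst hn
    have hz : (∑ g ∈ G, (∑ i : Fin 0, |a i (g i)| ^ p) ^ (1/p)) = 0 := by
      apply Finset.sum_eq_zero; intro g _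
      simp [Real.zero_rpow (inv_ne_zero hp0')]
    rw [hz, zero_div]
    have hsm : ∀ k, smat a k = 0 := by
      intro k
      simp [smat]
    simp [hsm, Real.zero_rpow hp0']
    positivity
  have hN : 0 < N := by
    rcases Nat.eq_zero_or_pos N with h | h
    · obtain ⟨g₀, hg₀⟩ := hG
      subst h
      exact (g₀ ⟨0, hn⟩).elim0
    · exact h
  have hGc : (0:ℝ) < G.card := by exact_mod_cast Finset.card_pos.mpr hG
  set f : Fin n × Fin N → ℝ := fun q => |a q.1 q.2| with hfdef
  have hf0 : ∀ q, 0 ≤ f q := fun q => abs_nonneg _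
  set L : List ℝ := ((Finset.univ : Finset (Fin n × Fin N)).toList.map f).mergeSort
      (fun a b => decide (b ≤ a)) with hLdef
  have hsmat : ∀ k, smat a k = L.getD (k-1) 0 := fun k => rfl
  have hperm : L.Perm ((Finset.univ : Finset (Fin n × Fin N)).toList.map f) :=
    List.mergeSort_perm _ _
  obtain ⟨M, hMp, hMmap⟩ := perm_lift f L (Finset.univ : Finset (Fin n × Fin N)).toList hperm
  have hMnd : M.Nodup := hMp.nodup_iff.mpr (Finset.nodup_toList _)
  have hMlen : M.length = n * N := by
    rw [hMp.length_eq, Finset.length_toList, Finset.card_univ]; simp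
  have hLlen : L.length = n * N := by rw [← hMmap, List.length_map, hMlen]
  set T : Finset (Fin n × Fin N) := (M.take N).toFinset with hT
  have hsplit : M.take N ++ M.drop N = M := List.take_append_drop N M
  have hndsplit : (M.take N ++ M.drop N).Nodup := by rw [hsplit]; exact hMnd
  have hnd1 : (M.take N).Nodup := (List.nodup_append.mp hndsplit).1
  have hnd2 : (M.drop N).Nodup := (List.nodup_append.mp hndsplit).2.1
  have hdisj := (List.nodup_append.mp hndsplit).2.2
  have hcompl : Finset.univ \ T = (M.drop N).toFinset := by
    apply Finset.ext; intro q
    have hqM : q ∈ M := hMp.mem_iff.mpr (by simp [Finset.mem_toList])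
    rw [← hsplit] at hqM
    simp only [Finset.mem_sdiff, Finset.mem_univ, true_and, hT, List.mem_toFinset]
    constructor
    · intro hq
      rcases List.mem_append.mp hqM with h | h
      · exact absurd h hq
      · exact h
    · intro hq hq2
      exact hdisj q hq2 q hq rfl
  have hsum1 : ∑ q ∈ T, f q = ∑ k ∈ Finset.range N, smat a (k+1) := by
    rw [hT, List.sum_toFinset f hnd1]
    have e : (M.take N).map f = L.take N := by rw [← hMmap, List.map_take]
    rw [e, ← sum_range_getD L N]
    apply Finset.sum_congr rfl
    intro k _
    rw [hsmat]
    simp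
  have hsum2 : ∑ q ∈ Finset.univ \ T, f q ^ p = ∑ k ∈ Finset.Icc (N+1) (n*N), smat a k ^ p := by
    rw [hcompl, List.sum_toFinset _ hnd2]
    have e1 : Finset.Icc (N+1) (n*N) = Finset.Ico (N+1) (n*N+1) := by rw [Finset.Ico_add_one_right_eq_Icc]
    rw [e1, Finset.sum_Ico_eq_sum_range]
    have e2 : n*N + 1 - (N+1) = (L.drop N).length := by rw [List.length_drop, hLlen]; omega
    rw [e2]
    have e3 : (M.drop N).map (fun q => f q ^ p) = (L.drop N).map (fun x => x ^ p) := by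
      rw [← hMmap, ← List.map_drop, List.map_map]
      rfl
    rw [e3, ← list_sum_map_getD (L.drop N) (fun x => x ^ p)]
    apply Finset.sum_congr rfl
    intro i _
    have e4 : N + 1 + i - 1 = N + i := by omega
    rw [hsmat, e4]
    congr 1
    simp [List.getD, List.getElem?_drop]
  set A1 : Fin n × Fin N → ℝ := fun q => if q ∈ T then f q else 0 with hA1def
  set A2 : Fin n × Fin N → ℝ := fun q => if q ∈ T then 0 else f q with hA2def
  have hA1nn : ∀ q, 0 ≤ A1 q := by
    intro q; rw [hA1def]; dsimp only; split
    · exact hf0 q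
    · exact le_rfl
  have hA2nn : ∀ q, 0 ≤ A2 q := by
    intro q; rw [hA2def]; dsimp only; split
    · exact le_rfl
    · exact hf0 q
  have hA12 : ∀ q, A1 q + A2 q = f q := by
    intro q; rw [hA1def, hA2def]; dsimp only; split <;> simp
  -- key counting identity
  have key : ∀ F : Fin n × Fin N → ℝ,
      (∑ g ∈ G, ∑ i, F (i, g i)) / G.card = (1/N) * ∑ q : Fin n × Fin N, F q := by
    intro F
    rw [Finset.sum_comm]
    have step : ∀ i : Fin n, ∑ g ∈ G, F (i, g i)
        = ∑ j : Fin N, ((G.filter fun g => g i = j).card : ℝ) * F (i,j) := by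
      intro i
      rw [← Finset.sum_fiberwise G (fun g => g i) (fun g => F (i, g i))]
      apply Finset.sum_congr rfl
      intro j _
      rw [Finset.sum_congr rfl (fun g hg => by rw [(Finset.mem_filter.mp hg).2]),
        Finset.sum_const, nsmul_eq_mul]
    calc (∑ i, ∑ g ∈ G, F (i, g i)) / G.card
        = ∑ i : Fin n, ∑ j : Fin N,
            (((G.filter fun g => g i = j).card : ℝ)/G.card) * F (i,j) := by
          rw [Finset.sum_div]
          apply Finset.sum_congr rfl
          intro i _
          rw [step i, Finset.sum_div]
          apply Finset.sum_congr rfl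
          intro j _
          ring
      _ = ∑ i : Fin n, ∑ j : Fin N, (1/(N:ℝ)) * F (i,j) := by
          apply Finset.sum_congr rfl; intro i _
          apply Finset.sum_congr rfl; intro j _
          rw [h1 i j]
      _ = (1/N) * ∑ q : Fin n × Fin N, F q := by
          rw [Fintype.sum_prod_type, Finset.mul_sum]
          apply Finset.sum_congr rfl; intro i _
          rw [Finset.mul_sum]
  -- pointwise Minkowski + ℓp ≤ ℓ1
  have step1 : ∀ g ∈ G, (∑ i, |a i (g i)| ^ p) ^ (1/p)
      ≤ (∑ i, A1 (i, g i)) + (∑ i, A2 (i, g i) ^ p) ^ (1/p) := by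
    intro g _
    have e : (∑ i, |a i (g i)| ^ p) = ∑ i, (A1 (i, g i) + A2 (i, g i)) ^ p := by
      apply Finset.sum_congr rfl
      intro i _
      rw [hA12 (i, g i)]
    rw [e]
    calc (∑ i, (A1 (i, g i) + A2 (i, g i)) ^ p) ^ (1/p)
        ≤ (∑ i, A1 (i,g i) ^ p)^(1/p) + (∑ i, A2 (i,g i) ^ p)^(1/p) :=
          Real.Lp_add_le_of_nonneg _ hp (fun i _ => hA1nn _) (fun i _ => hA2nn _)
      _ ≤ (∑ i, A1 (i,g i)) + (∑ i, A2 (i,g i) ^ p)^(1/p) := by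
          gcongr ?_ + _
          have h2 : (∑ i, A1 (i,g i) ^ p) ≤ (∑ i, A1 (i,g i)) ^ p :=
            sum_rpow_le_rpow_sum _ _ (fun i _ => hA1nn _) hp
          have h3 : ((∑ i, A1 (i,g i) ^ p))^(1/p) ≤ (((∑ i, A1 (i,g i)) ^ p))^(1/p) :=
            Real.rpow_le_rpow (Finset.sum_nonneg fun i _ => Real.rpow_nonneg (hA1nn _) p) h2
              (by positivity)
          rwa [one_div, Real.rpow_rpow_inv (Finset.sum_nonneg fun i _ => hA1nn _) hp0', ← one_div]
            at h3
  have sumle : (∑ g ∈ G, (∑ i, |a i (g i)| ^ p) ^ (1/p)) / G.card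
      ≤ (∑ g ∈ G, ∑ i, A1 (i, g i))/G.card
        + (∑ g ∈ G, (∑ i, A2 (i,g i)^p)^(1/p))/G.card := by
    rw [← add_div, ← Finset.sum_add_distrib]
    exact div_le_div_of_nonneg_right (Finset.sum_le_sum step1) hGc.le
  have t1 : (∑ g ∈ G, ∑ i, A1 (i, g i))/G.card
      = (1/N) * ∑ k ∈ Finset.range N, smat a (k+1) := by
    rw [key A1, ← hsum1]
    congr 1
    rw [hA1def]
    dsimp only
    rw [Finset.sum_ite_mem, Finset.univ_inter]
  have t2 : (∑ g ∈ G, (∑ i, A2 (i,g i)^p)^(1/p))/G.card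
      ≤ ((1/N) * ∑ k ∈ Finset.Icc (N+1) (n*N), smat a k ^ p)^(1/p) := by
    set z : (Fin n → Fin N) → ℝ := fun g => (∑ i, A2 (i, g i)^p)^(1/p) with hzdef
    have hznn : ∀ g ∈ G, 0 ≤ z g := fun g _ =>
      Real.rpow_nonneg (Finset.sum_nonneg fun i _ => Real.rpow_nonneg (hA2nn _) p) _
    have hw : ∑ _g ∈ G, (1/(G.card:ℝ)) = 1 := by
      rw [Finset.sum_const, nsmul_eq_mul]; field_simp
    have hJ := Real.arith_mean_le_rpow_mean G (fun _ => 1/(G.card:ℝ)) z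
      (fun _ _ => by positivity) hw hznn hp
    have hzp : ∀ g ∈ G, z g ^ p = ∑ i, A2 (i, g i)^p := by
      intro g _
      rw [hzdef]
      dsimp only
      rw [one_div, Real.rpow_inv_rpow
        (Finset.sum_nonneg fun i _ => Real.rpow_nonneg (hA2nn _) p) hp0']
    calc (∑ g ∈ G, z g)/G.card = ∑ g ∈ G, (1/(G.card:ℝ)) * z g := by
          rw [Finset.sum_div]
          apply Finset.sum_congr rfl; intro g _; ring
      _ ≤ (∑ g ∈ G, (1/(G.card:ℝ)) * z g ^ p)^(1/p) := hJ
      _ = ((∑ g ∈ G, ∑ i, A2 (i,g i)^p)/G.card)^(1/p) := by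
          congr 1
          rw [Finset.sum_div]
          apply Finset.sum_congr rfl; intro g hg
          rw [hzp g hg]; ring
      _ = ((1/N) * ∑ q : Fin n × Fin N, A2 q ^ p)^(1/p) := by
          rw [key (fun q => A2 q ^ p)]
      _ = ((1/N) * ∑ k ∈ Finset.Icc (N+1) (n*N), smat a k ^ p)^(1/p) := by
          rw [← hsum2]
          congr 2
          rw [hA2def]
          dsimp only
          calc ∑ q : Fin n × Fin N, (if q ∈ T then (0:ℝ) else f q)^p
              = ∑ q : Fin n × Fin N, (if q ∈ T then (0:ℝ) else f q ^ p) := by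
                apply Finset.sum_congr rfl; intro q _
                by_cases h : q ∈ T <;> simp [h, Real.zero_rpow hp0']
            _ = ∑ q ∈ Finset.univ \ T, f q ^ p := by
                rw [Finset.sum_ite, Finset.sum_const_zero, zero_add]
                apply Finset.sum_congr _ (fun _ _ => rfl)
                ext q; simp [Finset.mem_sdiff]
  refine le_trans sumle ?_
  rw [t1]
  exact add_le_add_right t2 _
end

section
/- Let $a \in \R^{n\times N}$, $1 \le p < \infty$, $C_G \ge 1$, and let $G$ be a finite collection of maps $g:\{1,\dots,n\}\to\{1,\dots,N\}$ with uniform probability satisfying $\Pro(g(i)=j)=1/N$ for all $i,j$ and $\Pro(g(i_1)=j_1,g(i_2)=j_2)\le C_G/N^2$ for all distinct pairs. Then there exists a constant $C>0$ depending only on $C_G$ such that $\E\Big(\sum_{i=1}^n |a_{ig(i)}|^p\Big)^{1/p} \ge C\Big[\frac{1}{N}\sum_{k=1}^N s(k) + \Big(\frac{1}{N}\sum_{k=N+1}^{nN} s(k)^p\Big)^{1/p}\Big]$, where $(s(k))$ is the decreasing rearrangement of $(|a_{ij}|)$. -/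
open Finset List


namespace Stmt17

noncomputable def LL {n N : ℕ} (a : Fin n → Fin N → ℝ) : List ℝ :=
  (((Finset.univ : Finset (Fin n × Fin N)).toList.map
      (fun p => |a p.1 p.2|)).mergeSort (fun a b => decide (b ≤ a)))

variable {n N : ℕ} (a : Fin n → Fin N → ℝ)

lemma smat_eq (k : ℕ) : smat a k = (LL a).getD (k-1) 0 := rfl

lemma LL_perm : LL a ~ (Finset.univ : Finset (Fin n × Fin N)).toList.map (fun p => |a p.1 p.2|) :=
  List.mergeSort_perm _ _

lemma LL_length : (LL a).length = n * N := by
  rw [(LL_perm a).length_eq, List.length_map, Finset.length_toList, Finset.card_univ]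
  simp

lemma LL_sorted : (LL a).Pairwise (fun x y => y ≤ x) := by
  have h := List.pairwise_mergeSort (le := fun (x y : ℝ) => decide (y ≤ x))
    (fun a b c h1 h2 => by simp only [decide_eq_true_eq] at *; linarith)
    (fun a b => by simpa using le_total b a)
    ((Finset.univ : Finset (Fin n × Fin N)).toList.map (fun p => |a p.1 p.2|))
  simpa [LL] using h

lemma LL_nonneg : ∀ x ∈ LL a, 0 ≤ x := by
  intro x hx
  have := (LL_perm a).mem_iff.mp hx
  obtain ⟨p, _, rfl⟩ := List.mem_map.mp this
  exact abs_nonneg _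

lemma smat_nonneg (k : ℕ) : 0 ≤ smat a k := by
  rcases lt_or_ge (k-1) (LL a).length with h | h
  · rw [smat_eq, List.getD_eq_getElem _ _ h]
    exact LL_nonneg a _ (List.getElem_mem h)
  · rw [smat_eq, List.getD_eq_default _ _ h]

lemma smat_anti {k l : ℕ} (hkl : k ≤ l) : smat a l ≤ smat a k := by
  rcases lt_or_ge (l-1) (LL a).length with h | h
  · rcases eq_or_lt_of_le (Nat.sub_le_sub_right hkl 1) with he | hlt
    · rw [smat_eq, smat_eq, he]
    · have hk : k - 1 < (LL a).length := lt_trans hlt h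
      rw [smat_eq, smat_eq, List.getD_eq_getElem _ _ h, List.getD_eq_getElem _ _ hk]
      exact (List.pairwise_iff_getElem.mp (LL_sorted a)) _ _ hk h hlt
  · rw [smat_eq (a := a) l, List.getD_eq_default _ _ h]
    exact smat_nonneg a k

lemma smat_zero_of_big {k : ℕ} (hk : n * N < k) : smat a k = 0 := by
  rw [smat_eq, List.getD_eq_default]
  rw [LL_length]; omega

lemma sum_range_getD (F : ℝ → ℝ) (l : List ℝ) :
    ∑ i ∈ Finset.range l.length, F (l.getD i 0) = (l.map F).sum := by
  induction l with
  | nil => simp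
  | cons x l ih =>
    rw [List.length_cons, Finset.sum_range_succ']
    simp only [List.getD_cons_succ, List.getD_cons_zero, List.map_cons, List.sum_cons, ih]
    ring

lemma list_sum_finset {α : Type*} (s : Finset α) (g : α → ℝ) :
    (s.toList.map g).sum = ∑ p ∈ s, g p := by
  rw [← Multiset.sum_coe, ← Multiset.map_coe, Finset.toList, Multiset.coe_toList, Finset.sum]

lemma sum_smat (F : ℝ → ℝ) :
    ∑ k ∈ Finset.range (n*N), F (smat a (k+1)) = ∑ p : Fin n × Fin N, F (|a p.1 p.2|) := by
  have h1 : ∑ k ∈ Finset.range (n*N), F (smat a (k+1)) = ((LL a).map F).sum := by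
    rw [← LL_length a, ← sum_range_getD]
    apply Finset.sum_congr rfl
    intro k _
    rw [smat_eq]
    norm_num
  rw [h1, ((LL_perm a).map F).sum_eq, List.map_map, list_sum_finset]
  rfl

lemma smat_card_le (t : ℕ) (ht1 : 1 ≤ t) (ht : t ≤ n*N) :
    t ≤ (Finset.univ.filter (fun q : Fin n × Fin N => smat a t ≤ |a q.1 q.2|)).card := by
  classical
  set pr : ℝ → Bool := fun x => decide (smat a t ≤ x) with hpr
  have hlen : t ≤ (LL a).length := by rw [LL_length]; exact ht
  have h2 : (Finset.univ.filter (fun q : Fin n × Fin N => smat a t ≤ |a q.1 q.2|)).card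
      = List.countP pr (LL a) := by
    rw [((LL_perm a).countP_eq pr), List.countP_map]
    rw [Finset.card, Finset.filter_val, ← Multiset.countP_eq_card_filter]
    rw [show (Finset.univ : Finset (Fin n × Fin N)).toList = Finset.univ.val.toList from rfl]
    conv_lhs => rw [← Multiset.coe_toList (Finset.univ : Finset (Fin n × Fin N)).val]
    rw [Multiset.coe_countP]
    rfl
  rw [h2]
  have h3 : (LL a).countP pr = ((LL a).take t).countP pr + ((LL a).drop t).countP pr := by
    rw [← List.countP_append, List.take_append_drop]
  have h4 : ((LL a).take t).countP pr = t := by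
    have hall : ∀ x ∈ (LL a).take t, pr x = true := by
      intro x hx
      obtain ⟨i, hi, rfl⟩ := List.mem_take_iff_getElem.mp hx
      have hit : i < t := lt_of_lt_of_le hi (min_le_left _ _)
      have hiL : i < (LL a).length := lt_of_lt_of_le hi (min_le_right _ _)
      have hs : smat a t ≤ (LL a)[i] := by
        have htL : t - 1 < (LL a).length := by omega
        rw [smat_eq, List.getD_eq_getElem _ _ htL]
        rcases eq_or_lt_of_le (by omega : i ≤ t - 1) with he | hlt2
        · subst he; rfl
        · exact (List.pairwise_iff_getElem.mp (LL_sorted a)) _ _ hiL htL hlt2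
      simpa [hpr]
    rw [List.countP_eq_length.mpr hall, List.length_take]
    omega
  omega


lemma abel_id (f : ℕ → ℝ) (T : ℕ) :
    ∑ i ∈ range T, (i+1 : ℝ) * (f (i+1) - f (i+2)) = ∑ i ∈ range T, f (i+1) - T * f (T+1) := by
  induction T with
  | zero => simp
  | succ T ih => rw [Finset.sum_range_succ, ih, Finset.sum_range_succ]; push_cast; ring

lemma layer_le (f : ℕ → ℝ) (hanti : ∀ k, f (k+1) ≤ f k) (hnn : ∀ k, 0 ≤ f k)
    (x : ℝ) (hx : 0 ≤ x) (T : ℕ) :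
    ∑ i ∈ range T, (f (i+1) - f (i+2)) * (if f (i+1) ≤ x then 1 else 0) ≤ x := by
  classical
  have key : ∀ T : ℕ, ∑ i ∈ range T, (f (i+1) - f (i+2)) * (if f (i+1) ≤ x then 1 else 0)
      ≤ if f T ≤ x then x - f (T+1) else 0 := by
    intro T
    induction T with
    | zero =>
      by_cases h : f 0 ≤ x
      · simp only [h, if_true, Finset.range_zero, Finset.sum_empty]
        have := hanti 0; linarith
      · simp [h]
    | succ T ih =>
      rw [Finset.sum_range_succ]
      by_cases h1 : f (T+1) ≤ x
      · simp only [h1, if_true, mul_one]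
        by_cases h0 : f T ≤ x
        · simp only [h0, if_true] at ih; linarith
        · simp only [h0, if_false] at ih; linarith
      · have h0 : ¬ f T ≤ x := fun hc => h1 (le_trans (hanti T) hc)
        simp only [h1, if_false, mul_zero, add_zero]
        simp only [h0, if_false] at ih
        exact ih
  refine le_trans (key T) ?_
  by_cases h : f T ≤ x
  · simp only [h, if_true]; have := hnn (T+1); linarith
  · simp [h, hx]


lemma exp_marg {n N : ℕ} (G : Finset (Fin n → Fin N)) (m : ℝ)
    (hcard : ∀ (i : Fin n) (j : Fin N), (((G.filter fun g => g i = j).card : ℕ) : ℝ) = m / N)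
    (i : Fin n) (F : Fin N → ℝ) :
    ∑ g ∈ G, F (g i) = (m/N) * ∑ j, F j := by
  classical
  have h1 : ∀ g : Fin n → Fin N, F (g i) = ∑ j, if g i = j then F j else 0 := by
    intro g
    rw [Finset.sum_ite_eq]
    simp
  calc ∑ g ∈ G, F (g i) = ∑ g ∈ G, ∑ j, (if g i = j then F j else 0) := by
        exact Finset.sum_congr rfl fun g _ => h1 g
    _ = ∑ j, ∑ g ∈ G, (if g i = j then F j else 0) := Finset.sum_comm
    _ = ∑ j, (m/N) * F j := by
        refine Finset.sum_congr rfl fun j _ => ?_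
        calc ∑ g ∈ G, (if g i = j then F j else 0)
            = ∑ g ∈ G, (if g i = j then (1:ℝ) else 0) * F j := by
              refine Finset.sum_congr rfl fun g _ => ?_
              by_cases h : g i = j <;> simp [h]
          _ = (((G.filter fun g => g i = j).card : ℕ) : ℝ) * F j := by
              rw [← Finset.sum_mul, Finset.sum_boole]
          _ = (m/N) * F j := by rw [hcard]
    _ = (m/N) * ∑ j, F j := by rw [Finset.mul_sum]

lemma exp_pair {n N : ℕ} (G : Finset (Fin n → Fin N)) (m CG : ℝ)
    (hpc : ∀ q r : Fin n × Fin N, q ≠ r →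
      (((G.filter fun g => g q.1 = q.2 ∧ g r.1 = r.2).card : ℕ) : ℝ) ≤ CG * m / (N:ℝ)^2)
    (i i' : Fin n) (hii : i ≠ i') (F H : Fin N → ℝ) (hF : ∀ j, 0 ≤ F j) (hH : ∀ j, 0 ≤ H j) :
    ∑ g ∈ G, F (g i) * H (g i') ≤ CG * m / (N:ℝ)^2 * ((∑ j, F j) * (∑ j, H j)) := by
  classical
  have key : ∀ g : Fin n → Fin N, F (g i) * H (g i')
      = ∑ j : Fin N, ∑ j' : Fin N, (if g i = j ∧ g i' = j' then F j * H j' else 0) := by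
    intro g
    have h1 : ∀ j, (∑ j' : Fin N, if g i = j ∧ g i' = j' then F j * H j' else 0)
        = if g i = j then F j * H (g i') else 0 := by
      intro j
      by_cases h : g i = j
      · simp only [h, true_and]
        rw [Finset.sum_ite_eq]
        simp
      · simp [h]
    simp_rw [h1]
    rw [Finset.sum_ite_eq]
    simp
  calc ∑ g ∈ G, F (g i) * H (g i')
      = ∑ j : Fin N, ∑ j' : Fin N, ∑ g ∈ G, (if g i = j ∧ g i' = j' then F j * H j' else 0) := by
        simp_rw [key]
        rw [Finset.sum_comm]
        exact Finset.sum_congr rfl fun j _ => Finset.sum_comm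
    _ ≤ ∑ j : Fin N, ∑ j' : Fin N, CG * m / (N:ℝ)^2 * (F j * H j') := by
        refine Finset.sum_le_sum fun j _ => Finset.sum_le_sum fun j' _ => ?_
        have e1 : ∑ g ∈ G, (if g i = j ∧ g i' = j' then F j * H j' else 0)
            = (((G.filter fun g => g i = j ∧ g i' = j').card : ℕ) : ℝ) * (F j * H j') := by
          rw [← Finset.sum_boole, Finset.sum_mul]
          refine Finset.sum_congr rfl fun g _ => ?_
          by_cases h : g i = j ∧ g i' = j' <;> simp [h]
        rw [e1]
        have h2 := hpc (i, j) (i', j') (by simp [Prod.ext_iff]; intro h; exact absurd h hii)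
        exact mul_le_mul_of_nonneg_right h2 (mul_nonneg (hF j) (hH j'))
    _ = CG * m / (N:ℝ)^2 * ((∑ j, F j) * (∑ j, H j)) := by
        rw [Finset.sum_mul_sum]
        rw [Finset.mul_sum]
        refine Finset.sum_congr rfl fun j _ => ?_
        rw [Finset.mul_sum]


lemma bonferroni {n N : ℕ} (G : Finset (Fin n → Fin N)) (T : Finset (Fin n × Fin N))
    (E : (Fin n → Fin N) → Prop) [DecidablePred E]
    (hE : ∀ g ∈ G, ∀ q ∈ T, g q.1 = q.2 → E g) :
    ∑ q ∈ T, ∑ g ∈ G, (if g q.1 = q.2 then (1:ℝ) else 0)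
      - (1/2) * ∑ q ∈ T, ∑ r ∈ T.erase q, ∑ g ∈ G,
          ((if g q.1 = q.2 then (1:ℝ) else 0) * (if g r.1 = r.2 then (1:ℝ) else 0))
    ≤ ∑ g ∈ G, (if E g then (1:ℝ) else 0) := by
  classical
  have pointwise : ∀ g ∈ G,
      (∑ q ∈ T, (if g q.1 = q.2 then (1:ℝ) else 0))
        - (1/2) * ∑ q ∈ T, ∑ r ∈ T.erase q,
            ((if g q.1 = q.2 then (1:ℝ) else 0) * (if g r.1 = r.2 then (1:ℝ) else 0))
      ≤ (if E g then (1:ℝ) else 0) := by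
    intro g hg
    set k := (T.filter fun q => g q.1 = q.2).card with hk
    have hx : ∑ q ∈ T, (if g q.1 = q.2 then (1:ℝ) else 0) = (k:ℝ) := Finset.sum_boole _ _
    have hxsq : ∀ q : Fin n × Fin N,
        (if g q.1 = q.2 then (1:ℝ) else 0) * (if g q.1 = q.2 then (1:ℝ) else 0)
        = (if g q.1 = q.2 then (1:ℝ) else 0) := by
      intro q; by_cases h : g q.1 = q.2 <;> simp [h]
    have hsq : ∑ q ∈ T, ∑ r ∈ T.erase q,
        ((if g q.1 = q.2 then (1:ℝ) else 0) * (if g r.1 = r.2 then (1:ℝ) else 0))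
        = (k:ℝ)^2 - (k:ℝ) := by
      have h1 : ∀ q ∈ T, ∑ r ∈ T.erase q,
          ((if g q.1 = q.2 then (1:ℝ) else 0) * (if g r.1 = r.2 then (1:ℝ) else 0))
          = (∑ r ∈ T, (if g q.1 = q.2 then (1:ℝ) else 0) * (if g r.1 = r.2 then (1:ℝ) else 0))
            - (if g q.1 = q.2 then (1:ℝ) else 0) := by
        intro q hq
        rw [← Finset.add_sum_erase _ _ hq, hxsq]
        ring
      rw [Finset.sum_congr rfl h1, Finset.sum_sub_distrib, hx]
      have h2 : ∑ q ∈ T, ∑ r ∈ T,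
          ((if g q.1 = q.2 then (1:ℝ) else 0) * (if g r.1 = r.2 then (1:ℝ) else 0))
          = (k:ℝ) * (k:ℝ) := by
        rw [← Finset.sum_mul_sum, hx]
      rw [h2]; ring
    rw [hx, hsq]
    rcases Nat.eq_zero_or_pos k with h0 | h1
    · rw [h0]
      simp only [Nat.cast_zero]
      have : (0:ℝ) ≤ if E g then 1 else 0 := by positivity
      linarith
    · have hne : (T.filter fun q => g q.1 = q.2).Nonempty := Finset.card_pos.mp h1
      obtain ⟨q, hq⟩ := hne
      rw [Finset.mem_filter] at hq
      have hEg : E g := hE g hg q hq.1 hq.2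
      rw [if_pos hEg]
      have hk1 : (1:ℝ) ≤ (k:ℝ) := by exact_mod_cast h1
      rcases eq_or_lt_of_le hk1 with he | hlt
      · rw [← he]; norm_num
      · have hk2 : (2:ℝ) ≤ (k:ℝ) := by
          have : 2 ≤ k := by exact_mod_cast hlt
          exact_mod_cast this
        nlinarith
  calc ∑ q ∈ T, ∑ g ∈ G, (if g q.1 = q.2 then (1:ℝ) else 0)
      - (1/2) * ∑ q ∈ T, ∑ r ∈ T.erase q, ∑ g ∈ G,
          ((if g q.1 = q.2 then (1:ℝ) else 0) * (if g r.1 = r.2 then (1:ℝ) else 0))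
      = ∑ g ∈ G, ((∑ q ∈ T, (if g q.1 = q.2 then (1:ℝ) else 0))
        - (1/2) * ∑ q ∈ T, ∑ r ∈ T.erase q,
            ((if g q.1 = q.2 then (1:ℝ) else 0) * (if g r.1 = r.2 then (1:ℝ) else 0))) := by
        rw [Finset.sum_sub_distrib, ← Finset.mul_sum]
        congr 1
        · exact Finset.sum_comm
        · congr 1
          rw [Finset.sum_comm]
          refine Finset.sum_congr rfl fun q _ => Finset.sum_comm
    _ ≤ ∑ g ∈ G, (if E g then (1:ℝ) else 0) := Finset.sum_le_sum pointwise

end Stmt17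

set_option maxHeartbeats 2000000 in
/-- Lower bound of Theorem 1.2: there is a constant `C > 0` depending only on
`C_G` such that `E (∑ᵢ |a_{i g(i)}|^p)^{1/p}` dominates
`C [N⁻¹ ∑_{k=1}^N s(k) + (N⁻¹ ∑_{k=N+1}^{nN} s(k)^p)^{1/p}]`. -/
theorem stmt17 (CG : ℝ) (hCG : 1 ≤ CG) :
    ∃ C : ℝ, 0 < C ∧
      ∀ (n N : ℕ) (a : Fin n → Fin N → ℝ) (p : ℝ), 1 ≤ p →
        ∀ (G : Finset (Fin n → Fin N)), G.Nonempty →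
        (∀ i : Fin n, ∀ j : Fin N,
          ((G.filter fun g => g i = j).card : ℝ) / G.card = 1 / N) →
        (∀ q r : Fin n × Fin N, q ≠ r →
          ((G.filter fun g => g q.1 = q.2 ∧ g r.1 = r.2).card : ℝ) / G.card
            ≤ CG / (N : ℝ) ^ 2) →
        (∑ g ∈ G, (∑ i, |a i (g i)| ^ p) ^ (1 / p)) / G.card
          ≥ C * ((1 / N) * ∑ k ∈ Finset.range N, smat a (k + 1)
            + ((1 / N) * ∑ k ∈ Finset.Icc (N + 1) (n * N), smat a k ^ p) ^ (1 / p)) := by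
  classical
  have hCG0 : (0:ℝ) < CG := lt_of_lt_of_le one_pos hCG
  refine ⟨1/(64*CG), by positivity, ?_⟩
  intro n N a p hp G hG h1 h2
  rw [ge_iff_le]
  set m : ℝ := ((G.card : ℕ) : ℝ) with hmdef
  have hm : 0 < m := by
    rw [hmdef]
    exact_mod_cast Finset.card_pos.mpr hG
  have hp0 : (0:ℝ) < p := lt_of_lt_of_le one_pos hp
  have hpne : p ≠ 0 := ne_of_gt hp0
  have hip : (0:ℝ) < 1/p := by positivity
  have hipne : (1:ℝ)/p ≠ 0 := ne_of_gt hip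
  set Mf : (Fin n → Fin N) → ℝ := fun g => (∑ i, |a i (g i)| ^ p) ^ (1/p) with hMfdef
  have hM0 : ∀ g, 0 ≤ Mf g :=
    fun g => Real.rpow_nonneg
      (Finset.sum_nonneg fun i _ => Real.rpow_nonneg (abs_nonneg _) p) _
  have hLHS0 : 0 ≤ (∑ g ∈ G, Mf g) / m :=
    div_nonneg (Finset.sum_nonneg fun g _ => hM0 g) hm.le
  have hgoalform : ∀ (X : ℝ),
      1/(64*CG) * X ≤ (∑ g ∈ G, Mf g) / m →
      1/(64*CG) * X ≤ (∑ g ∈ G, (∑ i, |a i (g i)| ^ p) ^ (1 / p)) / ((G.card : ℕ) : ℝ) :=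
    fun X h => h
  -- degenerate case N = 0
  rcases Nat.eq_zero_or_pos N with hN0 | hNpos
  · subst hN0
    refine hgoalform _ ?_
    simp only [Nat.cast_zero, div_zero, zero_mul, add_zero, zero_add,
      Real.zero_rpow hipne, mul_zero]
    exact hLHS0
  -- degenerate case n = 0
  rcases Nat.eq_zero_or_pos n with hn0 | hnpos
  · subst hn0
    refine hgoalform _ ?_
    have hA0 : ∀ k ∈ Finset.range N, smat a (k+1) = 0 :=
      fun k _ => Stmt17.smat_zero_of_big a (by omega)
    have hIcc : Finset.Icc (N+1) (0*N) = ∅ := by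
      apply Finset.Icc_eq_empty; omega
    rw [Finset.sum_congr rfl hA0, hIcc]
    simp only [Finset.sum_const_zero, mul_zero, Finset.sum_empty,
      Real.zero_rpow hipne, add_zero, mul_zero]
    exact hLHS0
  -- main case
  have hNr : (0:ℝ) < N := by exact_mod_cast hNpos
  have hcard : ∀ (i : Fin n) (j : Fin N),
      (((G.filter fun g => g i = j).card : ℕ) : ℝ) = m / N := by
    intro i j
    have h := h1 i j
    rw [div_eq_div_iff hm.ne' hNr.ne'] at h
    rw [eq_div_iff (ne_of_gt hNr)]
    linarith
  have hpc : ∀ q r : Fin n × Fin N, q ≠ r →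
      (((G.filter fun g => g q.1 = q.2 ∧ g r.1 = r.2).card : ℕ) : ℝ) ≤ CG * m / (N:ℝ)^2 := by
    intro q r hqr
    have h := h2 q r hqr
    rw [div_le_div_iff₀ hm (by positivity)] at h
    rw [le_div_iff₀ (by positivity : (0:ℝ) < (N:ℝ)^2)]
    nlinarith
  set ind : ℕ → (Fin n → Fin N) → ℝ :=
    fun t g => if smat a t ≤ Mf g then 1 else 0 with hinddef
  have hind0 : ∀ t g, 0 ≤ ind t g := by
    intro t g; rw [hinddef]; positivity
  have hMlb : ∀ (g : Fin n → Fin N) (q : Fin n × Fin N), g q.1 = q.2 →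
      |a q.1 q.2| ≤ Mf g := by
    intro g q hq
    have h1' : |a q.1 q.2| ^ p ≤ ∑ i, |a i (g i)| ^ p := by
      have := Finset.single_le_sum (f := fun i => |a i (g i)| ^ p)
        (fun i _ => Real.rpow_nonneg (abs_nonneg _) p) (Finset.mem_univ q.1)
      simpa [hq] using this
    have h2' : (|a q.1 q.2| ^ p) ^ (1/p) ≤ Mf g :=
      Real.rpow_le_rpow (Real.rpow_nonneg (abs_nonneg _) p) h1' hip.le
    rwa [← Real.rpow_mul (abs_nonneg _), mul_one_div, div_self hpne,
      Real.rpow_one] at h2'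
  have hprob : ∀ t : ℕ, 1 ≤ t → t ≤ 2*N →
      (t:ℝ)/(16*CG*N) ≤ (∑ g ∈ G, ind t g)/m := by
    intro t ht1 ht2
    have ht2r : (t:ℝ) ≤ 2*N := by exact_mod_cast ht2
    have ht1r : (1:ℝ) ≤ t := by exact_mod_cast ht1
    by_cases hbig : n*N < t
    · have hz := Stmt17.smat_zero_of_big a hbig
      have hone : ∀ g ∈ G, ind t g = 1 := by
        intro g _
        rw [hinddef]
        simp only [hz]
        rw [if_pos (hM0 g)]
      rw [Finset.sum_congr rfl hone, Finset.sum_const, nsmul_eq_mul, mul_one, ← hmdef,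
        div_self hm.ne']
      rw [div_le_one (by positivity)]
      nlinarith
    · push_neg at hbig
      set cgn := ⌈CG⌉₊ with hcgndef
      have hcgn1 : 1 ≤ cgn := Nat.one_le_ceil_iff.mpr hCG0
      have hcgnCG : CG ≤ (cgn:ℝ) := Nat.le_ceil CG
      have hcgnle : (cgn:ℝ) ≤ CG + 1 := by
        have := Nat.ceil_lt_add_one (by linarith : (0:ℝ) ≤ CG)
        linarith
      set u := min t (max (N / cgn) 1) with hudef
      have hu1 : 1 ≤ u := le_min ht1 (le_max_right _ _)
      have hu1r : (1:ℝ) ≤ u := by exact_mod_cast hu1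
      have hut : u ≤ t := min_le_left _ _
      have hutr : (u:ℝ) ≤ t := by exact_mod_cast hut
      have hunN : u ≤ n*N := le_trans hut hbig
      obtain ⟨T, hTsub, hTcard⟩ :=
        Finset.exists_subset_card_eq (Stmt17.smat_card_le a u hu1 hunN)
      have hTval : ∀ q ∈ T, smat a u ≤ |a q.1 q.2| := by
        intro q hq
        have := hTsub hq
        rw [Finset.mem_filter] at this
        exact this.2
      have hE : ∀ g ∈ G, ∀ q ∈ T, g q.1 = q.2 → smat a t ≤ Mf g := by
        intro g _ q hq hgq
        have h3 : |a q.1 q.2| ≤ Mf g := hMlb g q hgq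
        have h4 := Stmt17.smat_anti a hut
        have h5 := hTval q hq
        linarith
      have hbon := Stmt17.bonferroni G T (fun g => smat a t ≤ Mf g) hE
      have hterm1 : ∑ q ∈ T, ∑ g ∈ G, (if g q.1 = q.2 then (1:ℝ) else 0)
          = (u:ℝ) * (m/N) := by
        have e : ∀ q ∈ T, ∑ g ∈ G, (if g q.1 = q.2 then (1:ℝ) else 0) = m/N := by
          intro q _
          rw [Finset.sum_boole]
          exact hcard q.1 q.2
        rw [Finset.sum_congr rfl e, Finset.sum_const, nsmul_eq_mul, hTcard]
      have hterm2 : ∑ q ∈ T, ∑ r ∈ T.erase q, ∑ g ∈ G,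
            ((if g q.1 = q.2 then (1:ℝ) else 0) * (if g r.1 = r.2 then (1:ℝ) else 0))
          ≤ (u:ℝ) * ((u:ℝ) - 1) * (CG * m / (N:ℝ)^2) := by
        have e : ∀ q ∈ T, ∑ r ∈ T.erase q, ∑ g ∈ G,
              ((if g q.1 = q.2 then (1:ℝ) else 0) * (if g r.1 = r.2 then (1:ℝ) else 0))
            ≤ ((u:ℝ) - 1) * (CG * m / (N:ℝ)^2) := by
          intro q hq
          have e2 : ∀ r ∈ T.erase q, ∑ g ∈ G,
                ((if g q.1 = q.2 then (1:ℝ) else 0) * (if g r.1 = r.2 then (1:ℝ) else 0))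
              ≤ CG * m / (N:ℝ)^2 := by
            intro r hr
            have hqr : q ≠ r := fun hc => (Finset.mem_erase.mp hr).1 hc.symm
            have e3 : ∑ g ∈ G,
                ((if g q.1 = q.2 then (1:ℝ) else 0) * (if g r.1 = r.2 then (1:ℝ) else 0))
                = (((G.filter fun g => g q.1 = q.2 ∧ g r.1 = r.2).card : ℕ) : ℝ) := by
              rw [← Finset.sum_boole]
              refine Finset.sum_congr rfl fun g _ => ?_
              by_cases h : g q.1 = q.2 <;> by_cases h' : g r.1 = r.2 <;>
                simp [h, h']
            rw [e3]
            exact hpc q r hqr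
          calc ∑ r ∈ T.erase q, ∑ g ∈ G,
                ((if g q.1 = q.2 then (1:ℝ) else 0) * (if g r.1 = r.2 then (1:ℝ) else 0))
              ≤ ∑ _r ∈ T.erase q, CG * m / (N:ℝ)^2 := Finset.sum_le_sum e2
            _ = ((T.erase q).card : ℝ) * (CG * m / (N:ℝ)^2) := by
                rw [Finset.sum_const, nsmul_eq_mul]
            _ = ((u:ℝ) - 1) * (CG * m / (N:ℝ)^2) := by
                rw [Finset.card_erase_of_mem hq, hTcard]
                congr 1
                rw [Nat.cast_sub hu1, Nat.cast_one]
        calc ∑ q ∈ T, ∑ r ∈ T.erase q, ∑ g ∈ G,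
              ((if g q.1 = q.2 then (1:ℝ) else 0) * (if g r.1 = r.2 then (1:ℝ) else 0))
            ≤ ∑ _q ∈ T, ((u:ℝ) - 1) * (CG * m / (N:ℝ)^2) := Finset.sum_le_sum e
          _ = (u:ℝ) * (((u:ℝ) - 1) * (CG * m / (N:ℝ)^2)) := by
              rw [Finset.sum_const, nsmul_eq_mul, hTcard]
          _ = (u:ℝ) * ((u:ℝ) - 1) * (CG * m / (N:ℝ)^2) := by ring
      have hlow : (u:ℝ) * (m/N) - (1/2) * ((u:ℝ) * ((u:ℝ)-1) * (CG * m / (N:ℝ)^2))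
          ≤ ∑ g ∈ G, ind t g := by
        have := hbon
        rw [hterm1] at this
        have h6 : (u:ℝ) * (m/N) - (1/2) * ((u:ℝ) * ((u:ℝ)-1) * (CG * m / (N:ℝ)^2))
            ≤ (u:ℝ) * (m/N) - (1/2) * ∑ q ∈ T, ∑ r ∈ T.erase q, ∑ g ∈ G,
              ((if g q.1 = q.2 then (1:ℝ) else 0) * (if g r.1 = r.2 then (1:ℝ) else 0)) := by
          have hpos : 0 ≤ ∑ q ∈ T, ∑ r ∈ T.erase q, ∑ g ∈ G,
              ((if g q.1 = q.2 then (1:ℝ) else 0) * (if g r.1 = r.2 then (1:ℝ) else 0)) := by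
            refine Finset.sum_nonneg fun q _ => Finset.sum_nonneg fun r _ =>
              Finset.sum_nonneg fun g _ => ?_
            positivity
          linarith [hterm2]
        refine le_trans h6 (le_trans this ?_)
        refine le_of_eq (Finset.sum_congr rfl fun g _ => ?_)
        rw [hinddef]
      -- key numeric facts
      have hkey1 : ((u:ℝ) - 1) * CG ≤ N := by
        rcases eq_or_lt_of_le hu1 with he | hlt
        · rw [← he]; simp
        · have hu2 : 2 ≤ u := hlt
          have hudiv : u ≤ N / cgn := by
            have hmax : max (N / cgn) 1 = N / cgn := by
              rcases Nat.eq_zero_or_pos (N / cgn) with h0 | hpos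
              · exfalso
                have : u ≤ 1 := le_trans (min_le_right _ _) (by rw [h0]; simp)
                omega
              · exact max_eq_left hpos
            calc u ≤ max (N / cgn) 1 := min_le_right _ _
              _ = N / cgn := hmax
          have hmul : u * cgn ≤ N := (Nat.le_div_iff_mul_le (by omega)).mp hudiv
          have hmulr : (u:ℝ) * cgn ≤ N := by exact_mod_cast hmul
          have hc0 : (0:ℝ) ≤ (cgn:ℝ) := by positivity
          nlinarith
      have hkey2 : (t:ℝ) ≤ 8 * CG * u := by
        rcases eq_or_lt_of_le hut with he | hlt
        · rw [he]; nlinarith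
        · have humax : u = max (N / cgn) 1 := by
            rcases min_cases t (max (N / cgn) 1) with ⟨h, h'⟩ | ⟨h, h'⟩
            · omega
            · omega
          rcases Nat.eq_zero_or_pos (N / cgn) with h0 | hpos
          · have hu1' : u = 1 := by omega
            have hNcgn : N < cgn := by
              by_contra hc
              push_neg at hc
              have := Nat.one_le_div_iff (show 0 < cgn by omega) |>.mpr hc
              omega
            have hNcgnr : (N:ℝ) < cgn := by exact_mod_cast hNcgn
            rw [hu1']
            push_cast
            nlinarith
          · have hueq : u = N / cgn := by rw [humax, max_eq_left hpos]
            have hlt2 : N < cgn * u + cgn := by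
              rw [hueq]
              have := Nat.div_add_mod N cgn
              have := Nat.mod_lt N (show 0 < cgn by omega)
              omega
            have hlt2r : (N:ℝ) < cgn * u + cgn := by exact_mod_cast hlt2
            have hcu : (cgn:ℝ) ≤ cgn * u := by nlinarith [Nat.cast_nonneg (α := ℝ) cgn]
            have hN4 : (N:ℝ) < 4 * CG * u := by nlinarith
            nlinarith
      -- conclude
      have hdiv : ((u:ℝ) * (m/N) - (1/2) * ((u:ℝ) * ((u:ℝ)-1) * (CG * m / (N:ℝ)^2)))/m
          = (u:ℝ)/N - (u:ℝ)*((u:ℝ)-1)*CG/(2*(N:ℝ)^2) := by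
        field_simp
      have hstep : (t:ℝ)/(16*CG*N) ≤ (u:ℝ)/N - (u:ℝ)*((u:ℝ)-1)*CG/(2*(N:ℝ)^2) := by
        have hh1 : (u:ℝ)*((u:ℝ)-1)*CG/(2*(N:ℝ)^2) ≤ (u:ℝ)/(2*N) := by
          have hA : (u:ℝ)*(((u:ℝ)-1)*CG) ≤ (u:ℝ)*N :=
            mul_le_mul_of_nonneg_left hkey1 (by positivity)
          rw [div_le_div_iff₀ (by positivity) (by positivity)]
          nlinarith [mul_le_mul_of_nonneg_right hA (show (0:ℝ) ≤ 2*N by positivity)]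
        have hh2 : (t:ℝ)/(16*CG*N) ≤ (u:ℝ)/(2*N) := by
          rw [div_le_div_iff₀ (by positivity) (by positivity)]
          nlinarith [mul_le_mul_of_nonneg_right hkey2 (show (0:ℝ) ≤ 2*N by positivity)]
        have hh3 : (u:ℝ)/N - (u:ℝ)/(2*N) = (u:ℝ)/(2*N) := by
          field_simp
          ring
        linarith
      calc (t:ℝ)/(16*CG*N) ≤ (u:ℝ)/N - (u:ℝ)*((u:ℝ)-1)*CG/(2*(N:ℝ)^2) := hstep
        _ = ((u:ℝ) * (m/N) - (1/2) * ((u:ℝ) * ((u:ℝ)-1) * (CG * m / (N:ℝ)^2)))/m := hdiv.symm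
        _ ≤ (∑ g ∈ G, ind t g)/m := by
            gcongr
  have hprob' : ∀ t : ℕ, 1 ≤ t → t ≤ 2*N →
      (t:ℝ)/(16*CG*N) * m ≤ ∑ g ∈ G, ind t g := by
    intro t h1' h2'
    have h := hprob t h1' h2'
    calc (t:ℝ)/(16*CG*N) * m ≤ ((∑ g ∈ G, ind t g)/m) * m :=
          mul_le_mul_of_nonneg_right h hm.le
      _ = ∑ g ∈ G, ind t g := by field_simp
  -- A term
  have hA1 : (1/(16*CG*(N:ℝ))) * ((∑ k ∈ Finset.range N, smat a (k+1)) - N * smat a (N+1))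
      ≤ (∑ g ∈ G, Mf g)/m := by
    rw [le_div_iff₀ hm]
    have hub : ∑ i ∈ Finset.range N, ((smat a (i+1) - smat a (i+2)) * ∑ g ∈ G, ind (i+1) g)
        ≤ ∑ g ∈ G, Mf g := by
      simp_rw [Finset.mul_sum]
      rw [Finset.sum_comm]
      refine Finset.sum_le_sum fun g _ => ?_
      have h := Stmt17.layer_le (smat a) (fun k => Stmt17.smat_anti a (Nat.le_succ k))
        (Stmt17.smat_nonneg a) (Mf g) (hM0 g) N
      simpa [hinddef] using h
    have hstep1 : ∑ i ∈ Finset.range N,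
        ((smat a (i+1) - smat a (i+2)) * ((((i:ℕ):ℝ)+1)/(16*CG*N) * m))
        ≤ ∑ g ∈ G, Mf g := by
      refine le_trans (Finset.sum_le_sum fun i hi => ?_) hub
      have hD : 0 ≤ smat a (i+1) - smat a (i+2) :=
        sub_nonneg.mpr (Stmt17.smat_anti a (Nat.le_succ (i+1)))
      refine mul_le_mul_of_nonneg_left ?_ hD
      have hii : (((i:ℕ):ℝ)+1) = (((i+1:ℕ):ℕ):ℝ) := by push_cast; ring
      rw [hii]
      refine hprob' (i+1) (by omega) ?_
      have := Finset.mem_range.mp hi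
      omega
    refine le_trans (le_of_eq ?_) hstep1
    have habel := Stmt17.abel_id (smat a) N
    calc (1/(16*CG*(N:ℝ))) * ((∑ k ∈ Finset.range N, smat a (k+1)) - N * smat a (N+1)) * m
        = (∑ i ∈ Finset.range N, ((i:ℝ)+1) * (smat a (i+1) - smat a (i+2))) * (m/(16*CG*N)) := by
          rw [habel]; ring
      _ = ∑ i ∈ Finset.range N,
          ((smat a (i+1) - smat a (i+2)) * ((((i:ℕ):ℝ)+1)/(16*CG*N) * m)) := by
          rw [Finset.sum_mul]
          refine Finset.sum_congr rfl fun i _ => ?_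
          ring
  have hA2 : smat a (N+1) * (1/(16*CG)) ≤ (∑ g ∈ G, Mf g)/m := by
    rw [le_div_iff₀ hm]
    have h1' : ∀ g ∈ G, smat a (N+1) * ind (N+1) g ≤ Mf g := by
      intro g _
      simp only [hinddef]
      by_cases h : smat a (N+1) ≤ Mf g
      · rw [if_pos h]; simpa using h
      · rw [if_neg h]; simpa using hM0 g
    have h2' : smat a (N+1) * ((((N+1:ℕ):ℕ):ℝ)/(16*CG*N) * m) ≤ ∑ g ∈ G, Mf g := by
      refine le_trans ?_ (Finset.sum_le_sum h1')
      rw [← Finset.mul_sum]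
      exact mul_le_mul_of_nonneg_left (hprob' (N+1) (by omega) (by omega))
        (Stmt17.smat_nonneg a _)
    refine le_trans ?_ h2'
    have hcast : (((N+1:ℕ):ℕ):ℝ) = (N:ℝ)+1 := by push_cast; ring
    rw [hcast]
    have hfrac : (1/(16*CG)) * m ≤ ((N:ℝ)+1)/(16*CG*N) * m := by
      refine mul_le_mul_of_nonneg_right ?_ hm.le
      rw [div_le_div_iff₀ (by positivity) (by positivity)]
      nlinarith
    calc smat a (N+1) * (1/(16*CG)) * m = smat a (N+1) * ((1/(16*CG)) * m) := by ring
      _ ≤ smat a (N+1) * (((N:ℝ)+1)/(16*CG*N) * m) :=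
          mul_le_mul_of_nonneg_left hfrac (Stmt17.smat_nonneg a _)
  -- B term setup
  set σ : ℝ := smat a (N+1) with hsigdef
  have hσ0 : 0 ≤ σ := Stmt17.smat_nonneg a _
  have hmin0 : ∀ (i : Fin n) (j : Fin N), 0 ≤ min |a i j| σ :=
    fun i j => le_min (abs_nonneg _) hσ0
  set W : ℝ := ∑ q : Fin n × Fin N, (min |a q.1 q.2| σ) ^ p with hWdef
  have hW0 : 0 ≤ W :=
    Finset.sum_nonneg fun q _ => Real.rpow_nonneg (hmin0 q.1 q.2) p
  have hWrange : W = ∑ k ∈ Finset.range (n*N), (min (smat a (k+1)) σ)^p :=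
    (Stmt17.sum_smat a (fun x => (min x σ)^p)).symm
  have hB : ∑ k ∈ Finset.Icc (N+1) (n*N), smat a k ^ p ≤ W := by
    have e1 : ∑ k ∈ Finset.Icc (N+1) (n*N), smat a k ^ p
        = ∑ k ∈ Finset.Ico N (n*N), smat a (k+1) ^ p := by
      rw [← Finset.Ico_add_one_right_eq_Icc, Finset.sum_Ico_eq_sum_range, Finset.sum_Ico_eq_sum_range]
      have e2 : n*N + 1 - (N+1) = n*N - N := by omega
      rw [e2]
      refine Finset.sum_congr rfl fun i _ => ?_
      congr 2
      omega
    rw [e1, hWrange]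
    have e3 : ∀ k ∈ Finset.Ico N (n*N), smat a (k+1)^p = (min (smat a (k+1)) σ)^p := by
      intro k hk
      have hkN : N ≤ k := (Finset.mem_Ico.mp hk).1
      rw [min_eq_left (Stmt17.smat_anti a (by omega))]
    rw [Finset.sum_congr rfl e3]
    refine Finset.sum_le_sum_of_subset_of_nonneg ?_ ?_
    · rw [Finset.range_eq_Ico]
      exact Finset.Ico_subset_Ico (Nat.zero_le N) le_rfl
    · intro k _ _
      exact Real.rpow_nonneg (le_min (Stmt17.smat_nonneg a _) hσ0) p
  have hσp0 : 0 ≤ σ^p := Real.rpow_nonneg hσ0 p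
  have hσW : (N:ℝ) * σ^p ≤ W := by
    by_cases hcase : N+1 ≤ n*N
    · have e4 : ∀ k ∈ Finset.range (N+1), (min (smat a (k+1)) σ)^p = σ^p := by
        intro k hk
        have := Finset.mem_range.mp hk
        rw [min_eq_right (Stmt17.smat_anti a (by omega))]
      have e5 : ∑ k ∈ Finset.range (N+1), (min (smat a (k+1)) σ)^p ≤ W := by
        rw [hWrange]
        refine Finset.sum_le_sum_of_subset_of_nonneg (Finset.range_subset_range.mpr hcase) ?_
        intro k _ _
        exact Real.rpow_nonneg (le_min (Stmt17.smat_nonneg a _) hσ0) p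
      rw [Finset.sum_congr rfl e4, Finset.sum_const, Finset.card_range, nsmul_eq_mul] at e5
      push_cast at e5
      nlinarith
    · have hz : σ = 0 := Stmt17.smat_zero_of_big a (by omega)
      rw [hz, Real.zero_rpow hpne, mul_zero]
      exact hW0
  set row : Fin n → ℝ := fun i => ∑ j, (min |a i j| σ)^p with hrowdef
  have hrow0 : ∀ i, 0 ≤ row i :=
    fun i => Finset.sum_nonneg fun j _ => Real.rpow_nonneg (hmin0 i j) p
  have hWrow : W = ∑ i, row i := by
    rw [hWdef, Fintype.sum_prod_type]
  set Sf : (Fin n → Fin N) → ℝ := fun g => ∑ i, (min |a i (g i)| σ) ^ p with hSdef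
  have hS0 : ∀ g, 0 ≤ Sf g :=
    fun g => Finset.sum_nonneg fun i _ => Real.rpow_nonneg (hmin0 i (g i)) p
  have hSM : ∀ g, (Sf g)^(1/p) ≤ Mf g := by
    intro g
    refine Real.rpow_le_rpow (hS0 g) ?_ hip.le
    refine Finset.sum_le_sum fun i _ => ?_
    exact Real.rpow_le_rpow (hmin0 i (g i)) (min_le_left _ _) hp0.le
  have hES : ∑ g ∈ G, Sf g = (m/N) * W := by
    calc ∑ g ∈ G, Sf g = ∑ i : Fin n, ∑ g ∈ G, (min |a i (g i)| σ)^p := Finset.sum_comm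
      _ = ∑ i : Fin n, (m/N) * row i := by
          refine Finset.sum_congr rfl fun i _ => ?_
          exact Stmt17.exp_marg G m hcard i (fun j => (min |a i j| σ)^p)
      _ = (m/N) * W := by rw [← Finset.mul_sum, hWrow]
  have hES2 : ∑ g ∈ G, (Sf g)^2 ≤ m * (σ^p * (W/N)) + m * (CG * (W/N)^2) := by
    have hdiag : ∀ i : Fin n, ∑ g ∈ G, ((min |a i (g i)| σ)^p * (min |a i (g i)| σ)^p)
        ≤ (m/N) * (σ^p * row i) := by
      intro i
      rw [Stmt17.exp_marg G m hcard i (fun j => (min |a i j| σ)^p * (min |a i j| σ)^p)]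
      refine mul_le_mul_of_nonneg_left ?_ (by positivity)
      rw [hrowdef]
      simp only []
      rw [Finset.mul_sum]
      refine Finset.sum_le_sum fun j _ => ?_
      refine mul_le_mul_of_nonneg_right ?_ (Real.rpow_nonneg (hmin0 i j) p)
      exact Real.rpow_le_rpow (hmin0 i j) (min_le_right _ _) hp0.le
    have hoff : ∀ i : Fin n, ∑ i' ∈ Finset.univ.erase i, ∑ g ∈ G,
          ((min |a i (g i)| σ)^p * (min |a i' (g i')| σ)^p)
        ≤ CG*m/(N:ℝ)^2 * (row i * W) := by
      intro i
      have h1' : ∀ i' ∈ Finset.univ.erase i, ∑ g ∈ G,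
            ((min |a i (g i)| σ)^p * (min |a i' (g i')| σ)^p)
          ≤ CG*m/(N:ℝ)^2 * (row i * row i') := by
        intro i' hi'
        have hne : i ≠ i' := fun hc => (Finset.mem_erase.mp hi').1 hc.symm
        exact Stmt17.exp_pair G m CG hpc i i' hne _ _
          (fun j => Real.rpow_nonneg (hmin0 i j) p)
          (fun j => Real.rpow_nonneg (hmin0 i' j) p)
      refine le_trans (Finset.sum_le_sum h1') ?_
      have h2' : ∑ i' ∈ Finset.univ.erase i, CG*m/(N:ℝ)^2 * (row i * row i')
          ≤ ∑ i' : Fin n, CG*m/(N:ℝ)^2 * (row i * row i') := by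
        refine Finset.sum_le_sum_of_subset_of_nonneg (Finset.erase_subset _ _) ?_
        intro i' _ _
        have := hrow0 i
        have := hrow0 i'
        positivity
      refine le_trans h2' (le_of_eq ?_)
      rw [← Finset.mul_sum, ← Finset.mul_sum, hWrow]
    have expand : ∀ g, (Sf g)^2
        = ∑ i : Fin n, ∑ i' : Fin n, ((min |a i (g i)| σ)^p * (min |a i' (g i')| σ)^p) := by
      intro g
      rw [hSdef]
      simp only []
      rw [sq, Finset.sum_mul_sum]
    calc ∑ g ∈ G, (Sf g)^2
        = ∑ i : Fin n, ∑ i' : Fin n, ∑ g ∈ G,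
            ((min |a i (g i)| σ)^p * (min |a i' (g i')| σ)^p) := by
          rw [Finset.sum_congr rfl (fun g _ => expand g), Finset.sum_comm]
          exact Finset.sum_congr rfl fun i _ => Finset.sum_comm
      _ = ∑ i : Fin n, (∑ g ∈ G, ((min |a i (g i)| σ)^p * (min |a i (g i)| σ)^p)
            + ∑ i' ∈ Finset.univ.erase i, ∑ g ∈ G,
              ((min |a i (g i)| σ)^p * (min |a i' (g i')| σ)^p)) := by
          refine Finset.sum_congr rfl fun i _ => ?_
          exact (Finset.add_sum_erase _ _ (Finset.mem_univ i)).symm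
      _ ≤ ∑ i : Fin n, ((m/N) * (σ^p * row i) + CG*m/(N:ℝ)^2 * (row i * W)) :=
          Finset.sum_le_sum fun i _ => add_le_add (hdiag i) (hoff i)
      _ = (m/N) * (σ^p * W) + CG*m/(N:ℝ)^2 * (W * W) := by
          rw [Finset.sum_add_distrib]
          congr 1
          · rw [← Finset.mul_sum]
            congr 1
            rw [← Finset.mul_sum, hWrow]
          · rw [← Finset.mul_sum]
            congr 1
            rw [← Finset.sum_mul, hWrow]
      _ = m * (σ^p * (W/N)) + m * (CG * (W/N)^2) := by
          ring
  -- B term conclusion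
  have hBfinal : ((1/(N:ℝ)) * ∑ k ∈ Finset.Icc (N+1) (n*N), smat a k ^ p) ^ (1/p) * (1/(16*CG))
      ≤ (∑ g ∈ G, Mf g)/m := by
    by_cases hWz : W ≤ 0
    · have hIcc0 : ∑ k ∈ Finset.Icc (N+1) (n*N), smat a k ^ p = 0 := by
        have h1' : 0 ≤ ∑ k ∈ Finset.Icc (N+1) (n*N), smat a k ^ p :=
          Finset.sum_nonneg fun k _ => Real.rpow_nonneg (Stmt17.smat_nonneg a k) p
        linarith [hB]
      rw [hIcc0, mul_zero, Real.zero_rpow hipne, zero_mul]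
      exact hLHS0
    · push_neg at hWz
      have hWN : (0:ℝ) < W/N := by positivity
      set indB : (Fin n → Fin N) → ℝ := fun g => if (W/N)/2 ≤ Sf g then 1 else 0
        with hindBdef
      have hindB0 : ∀ g, 0 ≤ indB g := by
        intro g; simp only [hindBdef]; positivity
      have hSind : (m/N)*W/2 ≤ ∑ g ∈ G, Sf g * indB g := by
        have hpt : ∀ g ∈ G, Sf g - Sf g * indB g ≤ (W/N)/2 := by
          intro g _
          simp only [hindBdef]
          by_cases h : (W/N)/2 ≤ Sf g
          · rw [if_pos h]
            simp only [mul_one, sub_self]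
            positivity
          · rw [if_neg h]
            push_neg at h
            simp only [mul_zero, sub_zero]
            linarith
        have hsum := Finset.sum_le_card_nsmul G _ _ hpt
        rw [nsmul_eq_mul, ← hmdef] at hsum
        rw [Finset.sum_sub_distrib, hES] at hsum
        have : m * ((W/N)/2) = (m/N)*W/2 := by ring
        linarith
      have hCS := Finset.sum_mul_sq_le_sq_mul_sq G Sf indB
      have hindBsq : ∀ g ∈ G, (indB g)^2 = indB g := by
        intro g _
        simp only [hindBdef]
        by_cases h : (W/N)/2 ≤ Sf g
        · rw [if_pos h]; norm_num
        · rw [if_neg h]; norm_num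
      rw [Finset.sum_congr rfl hindBsq] at hCS
      have hσpW : σ^p ≤ W/N := by
        rw [le_div_iff₀ hNr]
        linarith [hσW]
      have hSS : ∑ g ∈ G, (Sf g)^2 ≤ m*(1+CG)*(W/N)^2 := by
        have h1' : m * (σ^p * (W/N)) ≤ m * ((W/N) * (W/N)) := by
          refine mul_le_mul_of_nonneg_left ?_ hm.le
          exact mul_le_mul_of_nonneg_right hσpW hWN.le
        nlinarith [hES2]
      have hPZ : m/(4*(1+CG)) ≤ ∑ g ∈ G, indB g := by
        have hkey : ((m/N)*W/2)^2 ≤ m*(1+CG)*(W/N)^2 * ∑ g ∈ G, indB g := by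
          have h1' : ((m/N)*W/2)^2 ≤ (∑ g ∈ G, Sf g * indB g)^2 := by
            refine pow_le_pow_left₀ ?_ hSind 2
            positivity
          calc ((m/N)*W/2)^2 ≤ (∑ g ∈ G, Sf g * indB g)^2 := h1'
            _ ≤ (∑ g ∈ G, (Sf g)^2) * ∑ g ∈ G, indB g := hCS
            _ ≤ m*(1+CG)*(W/N)^2 * ∑ g ∈ G, indB g := by
                refine mul_le_mul_of_nonneg_right hSS ?_
                exact Finset.sum_nonneg fun g _ => hindB0 g
        have hCGp : (0:ℝ) < 1+CG := by linarith
        rw [div_le_iff₀ (by positivity)]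
        have heq : ((m/N)*W/2)^2 = m^2*(W/N)^2/4 := by
          field_simp
          ring
        rw [heq] at hkey
        have hfac : (0:ℝ) < (W/N)^2 := by positivity
        nlinarith [mul_pos (mul_pos hm hCGp) hfac, sq_nonneg m]
      set Q : ℝ := ((W/N)/2)^(1/p) with hQdef
      have hQ0 : 0 ≤ Q := Real.rpow_nonneg (by positivity) _
      have hMlow : Q * (m/(4*(1+CG))) ≤ ∑ g ∈ G, Mf g := by
        have hpt : ∀ g ∈ G, Q * indB g ≤ Mf g := by
          intro g _
          simp only [hindBdef]
          by_cases h : (W/N)/2 ≤ Sf g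
          · rw [if_pos h, mul_one]
            refine le_trans ?_ (hSM g)
            rw [hQdef]
            exact Real.rpow_le_rpow (by positivity) h hip.le
          · rw [if_neg h, mul_zero]
            exact hM0 g
        calc Q * (m/(4*(1+CG))) ≤ Q * ∑ g ∈ G, indB g :=
              mul_le_mul_of_nonneg_left hPZ hQ0
          _ = ∑ g ∈ G, Q * indB g := Finset.mul_sum _ _ _
          _ ≤ ∑ g ∈ G, Mf g := Finset.sum_le_sum hpt
      have hBW : ((1/(N:ℝ)) * ∑ k ∈ Finset.Icc (N+1) (n*N), smat a k ^ p) ^ (1/p)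
          ≤ 2 * Q := by
        have h1' : (1/(N:ℝ)) * ∑ k ∈ Finset.Icc (N+1) (n*N), smat a k ^ p ≤ W/N := by
          calc (1/(N:ℝ)) * ∑ k ∈ Finset.Icc (N+1) (n*N), smat a k ^ p
              ≤ (1/(N:ℝ)) * W := mul_le_mul_of_nonneg_left hB (by positivity)
            _ = W/N := by ring
        have h2' : ((1/(N:ℝ)) * ∑ k ∈ Finset.Icc (N+1) (n*N), smat a k ^ p) ^ (1/p)
            ≤ (W/N)^(1/p) := by
          refine Real.rpow_le_rpow ?_ h1' hip.le
          refine mul_nonneg (by positivity) ?_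
          exact Finset.sum_nonneg fun k _ => Real.rpow_nonneg (Stmt17.smat_nonneg a k) p
        have h3' : (W/N)^(1/p) = 2^((1:ℝ)/p) * Q := by
          rw [hQdef, ← Real.mul_rpow (by norm_num) (by positivity)]
          congr 1
          ring
        have h4' : (2:ℝ)^((1:ℝ)/p) ≤ 2 := by
          calc (2:ℝ)^((1:ℝ)/p) ≤ 2^(1:ℝ) := by
                refine Real.rpow_le_rpow_of_exponent_le (by norm_num) ?_
                rw [div_le_one hp0]
                exact hp
            _ = 2 := Real.rpow_one 2
        calc ((1/(N:ℝ)) * ∑ k ∈ Finset.Icc (N+1) (n*N), smat a k ^ p) ^ (1/p)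
            ≤ (W/N)^(1/p) := h2'
          _ = 2^((1:ℝ)/p) * Q := h3'
          _ ≤ 2 * Q := mul_le_mul_of_nonneg_right h4' hQ0
      rw [le_div_iff₀ hm]
      have hCGp : (0:ℝ) < 1+CG := by linarith
      calc ((1/(N:ℝ)) * ∑ k ∈ Finset.Icc (N+1) (n*N), smat a k ^ p) ^ (1/p)
            * (1/(16*CG)) * m
          ≤ (2*Q) * (1/(16*CG)) * m := by
            refine mul_le_mul_of_nonneg_right ?_ hm.le
            exact mul_le_mul_of_nonneg_right hBW (by positivity)
        _ = Q * (m/(8*CG)) := by ring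
        _ ≤ Q * (m/(4*(1+CG))) := by
            refine mul_le_mul_of_nonneg_left ?_ hQ0
            refine div_le_div_of_nonneg_left hm.le (by positivity) ?_
            nlinarith
        _ ≤ ∑ g ∈ G, Mf g := hMlow
  -- final assembly
  have hAfinal : ((1/(N:ℝ)) * ∑ k ∈ Finset.range N, smat a (k+1)) * (1/(32*CG))
      ≤ (∑ g ∈ G, Mf g)/m := by
    have heq : (1/(16*CG*(N:ℝ))) * ((∑ k ∈ Finset.range N, smat a (k+1)) - N * smat a (N+1))
        + smat a (N+1) * (1/(16*CG))
        = ((1/(N:ℝ)) * ∑ k ∈ Finset.range N, smat a (k+1)) * (2 * (1/(32*CG))) := by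
      field_simp
      ring
    nlinarith [hA1, hA2]
  refine hgoalform _ ?_
  have hA0' : 0 ≤ (1/(N:ℝ)) * ∑ k ∈ Finset.range N, smat a (k+1) := by
    refine mul_nonneg (by positivity) ?_
    exact Finset.sum_nonneg fun k _ => Stmt17.smat_nonneg a _
  have hB0' : 0 ≤ ((1/(N:ℝ)) * ∑ k ∈ Finset.Icc (N+1) (n*N), smat a k ^ p) ^ (1/p) :=
    Real.rpow_nonneg (mul_nonneg (by positivity)
      (Finset.sum_nonneg fun k _ => Real.rpow_nonneg (Stmt17.smat_nonneg a k) p)) _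
  rw [one_div_mul_eq_div, div_le_iff₀ (show (0:ℝ) < 64*CG by positivity)]
  rw [mul_one_div, div_le_iff₀ (show (0:ℝ) < 32*CG by positivity)] at hAfinal
  rw [mul_one_div, div_le_iff₀ (show (0:ℝ) < 16*CG by positivity)] at hBfinal
  nlinarith [mul_nonneg hLHS0 hCG0.le]
end
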